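/- arXiv:2107.04777 — 8 statements merged into one kernel-verified Lean document; each statement's English description precedes it below -/
import Mathlib

section
/- For all x, y ∈ (0, π/2] with x + y < π, and all β ∈ [3/2, 2]: cot(x+y) ≤ 1_{{x+y ≥ π/2}} · cot(x+y) + (cot(x) · cot(y))^β. Equivalently, whenever x, y ∈ (0, π/2] and x + y < π/2, one has cot(x+y) ≤ (cot(x) · cot(y))^β. -/
open Real Set

lemma cot_eq_tan_pi_div_two_sub (t : ℝ) : Real.cot t = Real.tan (π / 2 - t) := by
  rw [Real.cot_eq_cos_div_sin, Real.tan_eq_sin_div_cos, Real.sin_pi_div_two_sub,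
    Real.cos_pi_div_two_sub]

/-- Inequality (5.7) of Lemma 5.2: for `x, y ∈ (0, π/2]` with `x + y < π` and
`β ∈ [3/2, 2]`, one has `cot(x+y) ≤ 1_{x+y ≥ π/2} cot(x+y) + (cot x · cot y)^β`. -/
theorem cot_add_le_indicator_add_rpow :
    ∀ x ∈ Ioc (0 : ℝ) (π / 2), ∀ y ∈ Ioc (0 : ℝ) (π / 2), x + y < π →
      ∀ β ∈ Icc (3 / 2 : ℝ) 2,
        Real.cot (x + y)
          ≤ (if π / 2 ≤ x + y then Real.cot (x + y) else 0)
            + (Real.cot x * Real.cot y) ^ β := by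
  rintro x ⟨hx0, hx2⟩ y ⟨hy0, hy2⟩ hxy β ⟨hβ1, hβ2⟩
  by_cases h : π / 2 ≤ x + y
  · rw [if_pos h]
    have hcx : 0 ≤ Real.cot x := by
      rw [cot_eq_tan_pi_div_two_sub]
      exact Real.tan_nonneg_of_nonneg_of_le_pi_div_two (by linarith) (by linarith)
    have hcy : 0 ≤ Real.cot y := by
      rw [cot_eq_tan_pi_div_two_sub]
      exact Real.tan_nonneg_of_nonneg_of_le_pi_div_two (by linarith) (by linarith)
    have : (0:ℝ) ≤ (Real.cot x * Real.cot y) ^ β :=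
      Real.rpow_nonneg (mul_nonneg hcx hcy) β
    linarith
  · rw [if_neg h, zero_add]
    push_neg at h
    -- x + y < π/2, so x, y < π/2
    have hx2' : x < π / 2 := by linarith
    have hy2' : y < π / 2 := by linarith
    set a := Real.cot x with ha
    set b := Real.cot y with hb
    -- cot(x+y) < a and cot(x+y) < b
    have hca : Real.cot (x + y) < a := by
      rw [ha, cot_eq_tan_pi_div_two_sub, cot_eq_tan_pi_div_two_sub]
      exact Real.tan_lt_tan_of_lt_of_lt_pi_div_two (by linarith) (by linarith) (by linarith)
    have hcb : Real.cot (x + y) < b := by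
      rw [hb, cot_eq_tan_pi_div_two_sub, cot_eq_tan_pi_div_two_sub]
      exact Real.tan_lt_tan_of_lt_of_lt_pi_div_two (by linarith) (by linarith) (by linarith)
    -- a > tan y > 0
    have hta : Real.tan y < a := by
      rw [ha, cot_eq_tan_pi_div_two_sub]
      exact Real.tan_lt_tan_of_lt_of_lt_pi_div_two (by linarith) (by linarith) (by linarith)
    have hty : 0 < Real.tan y := Real.tan_pos_of_pos_of_lt_pi_div_two hy0 hy2'
    have hbpos : 0 < b := by
      rw [hb, cot_eq_tan_pi_div_two_sub]
      exact Real.tan_pos_of_pos_of_lt_pi_div_two (by linarith) (by linarith)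
    have hapos : 0 < a := lt_trans hty hta
    -- tan y * cot y = 1
    have htc : Real.tan y * b = 1 := by
      rw [hb, Real.tan_eq_sin_div_cos, Real.cot_eq_cos_div_sin]
      have hs : Real.sin y ≠ 0 := ne_of_gt (Real.sin_pos_of_pos_of_lt_pi hy0 (by linarith))
      have hc : Real.cos y ≠ 0 := ne_of_gt (Real.cos_pos_of_mem_Ioo ⟨by linarith, hy2'⟩)
      field_simp
    have hab1 : 1 < a * b := by
      calc 1 = Real.tan y * b := htc.symm
        _ < a * b := by exact mul_lt_mul_of_pos_right hta hbpos
    -- cot(x+y) ≤ a * b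
    have hcab : Real.cot (x + y) ≤ a * b := by
      rcases le_or_gt (Real.cot (x + y)) 1 with hc1 | hc1
      · linarith
      · nlinarith
    calc Real.cot (x + y) ≤ a * b := hcab
      _ = (a * b) ^ (1 : ℝ) := (Real.rpow_one _).symm
      _ ≤ (a * b) ^ β := Real.rpow_le_rpow_of_exponent_le (le_of_lt hab1) (by linarith)
end

section
/- There exists an absolute constant C > 0 such that for all x, y ∈ (0, π/2) and all β ∈ [3/2, 2]: min( cot(y) · (cot(x))^{β−2}, cot(x) · (cot(y))^{β−2} ) ≤ C [ (cot(x) · cot(y))^β + 1_{{x+y ≥ π/2}} · cot(π − x − y) ]. -/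
open Real Set

lemma cot_aux (a b β : ℝ) (ha : 0 < a) (hb : 0 < b) (hba : b ≤ a)
    (hβ1 : 3/2 ≤ β) (hβ2 : β ≤ 2) :
    b * a ^ (β - 2) ≤ 4 * ((a * b) ^ β + (if a * b ≤ 1 then (1 - a * b) / (a + b) else 0)) := by
  have hab : 0 < a * b := mul_pos ha hb
  have h2a : a ^ (2:ℝ) = a * a := by
    rw [show (2:ℝ) = ((2:ℕ):ℝ) by norm_num, Real.rpow_natCast]; ring
  rcases le_or_gt 1 (a * b) with h1 | h1
  · -- main term dominates
    have hA1 : 1 ≤ a := by nlinarith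
    have hkey : b ^ (1 - β) ≤ a ^ (2:ℝ) := by
      rw [h2a]
      rcases le_or_gt 1 b with hb1 | hb1
      · have h1' : b ^ (1 - β) ≤ 1 :=
          Real.rpow_le_one_of_one_le_of_nonpos hb1 (by linarith)
        nlinarith
      · have h1' : b ^ (1 - β) ≤ b ^ (-1:ℝ) :=
          Real.rpow_le_rpow_of_exponent_ge hb hb1.le (by linarith)
        have h2' : b ^ (-1:ℝ) = b⁻¹ := Real.rpow_neg_one b
        have h3' : b⁻¹ ≤ a := by
          rw [inv_eq_one_div, div_le_iff₀ hb]; linarith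
        nlinarith
    have hmain : b * a ^ (β - 2) ≤ (a * b) ^ β := by
      have e : b * a ^ (β - 2) = (a ^ β * b ^ β) * (b ^ (1 - β) * a ^ (-2:ℝ)) := by
        rw [show a ^ β * b ^ β * (b ^ (1-β) * a ^ (-2:ℝ))
              = (b ^ β * b ^ (1-β)) * (a ^ β * a ^ (-2:ℝ)) by ring,
            ← Real.rpow_add hb, ← Real.rpow_add ha,
            show β + (1-β) = (1:ℝ) by ring, show β + (-2:ℝ) = β - 2 by ring,
            Real.rpow_one]
      rw [Real.mul_rpow ha.le hb.le, e]
      have hinv : b ^ (1 - β) * a ^ (-2:ℝ) ≤ 1 := by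
        have hpos : 0 < a ^ (2:ℝ) := by positivity
        have hn : a ^ (-2:ℝ) = (a ^ (2:ℝ))⁻¹ := by
          rw [show (-2:ℝ) = -(2:ℝ) by norm_num, Real.rpow_neg ha.le]
        rw [hn, mul_inv_le_iff₀ hpos, one_mul]
        exact hkey
      have hpos2 : 0 ≤ a ^ β * b ^ β := by positivity
      nlinarith [Real.rpow_nonneg hb.le (1-β), Real.rpow_nonneg ha.le (-2:ℝ)]
    have hterm : 0 ≤ (if a * b ≤ 1 then (1 - a * b) / (a + b) else 0) := by
      split
      · apply div_nonneg (by linarith) (by positivity)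
      · exact le_refl 0
    linarith [Real.rpow_nonneg hab.le β]
  · -- indicator on
    rw [if_pos h1.le]
    have hb1 : b < 1 := by nlinarith
    rcases le_or_gt (a * b) (1/2) with h2 | h2
    · -- small ab: use the cot term
      have hstep : b * a ^ (β - 1) ≤ 1 := by
        rcases le_or_gt a 1 with hA | hA
        · have : a ^ (β - 1) ≤ 1 := Real.rpow_le_one ha.le hA (by linarith)
          nlinarith [Real.rpow_nonneg ha.le (β-1)]
        · have h' : a ^ (β - 1) ≤ a ^ (1:ℝ) :=
            Real.rpow_le_rpow_of_exponent_le hA.le (by linarith)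
          rw [Real.rpow_one] at h'
          nlinarith [Real.rpow_nonneg ha.le (β-1)]
      have e : b * a ^ (β - 2) = (b * a ^ (β - 1)) / a := by
        rw [show β - 2 = (β - 1) + (-1:ℝ) by ring, Real.rpow_add ha, Real.rpow_neg_one]
        field_simp
      have h3 : b * a ^ (β - 2) ≤ 1 / a := by
        rw [e]; gcongr
      have h4 : 1 / a ≤ 4 * ((1 - a*b) / (a+b)) := by
        rw [show (4:ℝ) * ((1 - a*b)/(a+b)) = (4*(1-a*b))/(a+b) by ring,
            div_le_div_iff₀ ha (by positivity)]
        nlinarith [mul_le_mul_of_nonneg_left (by linarith : (2:ℝ) ≤ 4 - 4*(a*b)) ha.le]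
      linarith [Real.rpow_nonneg hab.le β]
    · -- ab large: use (ab)^β
      have hpow : (a*b) ^ (2:ℝ) ≤ (a*b) ^ β :=
        Real.rpow_le_rpow_of_exponent_ge hab h1.le hβ2
      have h2ab : (a*b) ^ (2:ℝ) = (a*b) * (a*b) := by
        rw [show (2:ℝ) = ((2:ℕ):ℝ) by norm_num, Real.rpow_natCast]; ring
      have hq : (1:ℝ)/4 ≤ (a*b) ^ (2:ℝ) := by
        rw [h2ab]; nlinarith [sq_nonneg (a*b - 1/2)]
      have hge : 1 ≤ 4 * (a*b) ^ β := by linarith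
      have hle1 : b * a ^ (β - 2) ≤ 1 := by
        rcases le_or_gt a 1 with hA | hA
        · have h' : a ^ (β - 2) ≤ a ^ (-(1/2):ℝ) :=
            Real.rpow_le_rpow_of_exponent_ge ha hA (by linarith)
          have e1 : a * a ^ (-(1/2):ℝ) = a ^ ((1:ℝ)/2) := by
            nth_rewrite 1 [← Real.rpow_one a]
            rw [← Real.rpow_add ha]; norm_num
          have e2 : a ^ ((1:ℝ)/2) ≤ 1 := Real.rpow_le_one ha.le hA (by norm_num)
          nlinarith [Real.rpow_nonneg ha.le (β-2), Real.rpow_nonneg ha.le (-(1/2):ℝ)]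
        · have h' : a ^ (β - 2) ≤ 1 :=
            Real.rpow_le_one_of_one_le_of_nonpos hA.le (by linarith)
          nlinarith [Real.rpow_nonneg ha.le (β-2)]
      have hdiv : 0 ≤ (1 - a*b)/(a+b) := div_nonneg (by linarith) (by positivity)
      linarith

/-- Inequality (5.8) of Lemma 5.2: for `x, y ∈ (0, π/2)` and `β ∈ [3/2, 2]`,
`min(cot y (cot x)^{β-2}, cot x (cot y)^{β-2})
  ≤ C ((cot x cot y)^β + 1_{x+y ≥ π/2} cot(π - x - y))`. -/
theorem min_cot_mix_le :
    ∃ C : ℝ, 0 < C ∧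
      ∀ x ∈ Ioo (0 : ℝ) (π / 2), ∀ y ∈ Ioo (0 : ℝ) (π / 2),
        ∀ β ∈ Icc (3 / 2 : ℝ) 2,
          min (Real.cot y * Real.cot x ^ (β - 2)) (Real.cot x * Real.cot y ^ (β - 2))
            ≤ C * ((Real.cot x * Real.cot y) ^ β
                + (if π / 2 ≤ x + y then Real.cot (π - x - y) else 0)) := by
  refine ⟨4, by norm_num, ?_⟩
  intro x hx y hy β hβ
  obtain ⟨hx0, hx2⟩ := hx
  obtain ⟨hy0, hy2⟩ := hy
  obtain ⟨hβ1, hβ2⟩ := hβ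
  have hpi := Real.pi_pos
  have hsx : 0 < Real.sin x := Real.sin_pos_of_pos_of_lt_pi hx0 (by linarith)
  have hcx : 0 < Real.cos x := Real.cos_pos_of_mem_Ioo ⟨by linarith, hx2⟩
  have hsy : 0 < Real.sin y := Real.sin_pos_of_pos_of_lt_pi hy0 (by linarith)
  have hcy : 0 < Real.cos y := Real.cos_pos_of_mem_Ioo ⟨by linarith, hy2⟩
  have hsxy : 0 < Real.sin (x + y) :=
    Real.sin_pos_of_pos_of_lt_pi (by linarith) (by linarith)
  have hacos : Real.cot x = Real.cos x / Real.sin x := Real.cot_eq_cos_div_sin x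
  have hbcos : Real.cot y = Real.cos y / Real.sin y := Real.cot_eq_cos_div_sin y
  set a := Real.cot x with hadef
  set b := Real.cot y with hbdef
  have ha : 0 < a := by rw [hacos]; positivity
  have hb : 0 < b := by rw [hbcos]; positivity
  have hd : a * b - 1 = Real.cos (x + y) / (Real.sin x * Real.sin y) := by
    rw [hacos, hbcos, Real.cos_add]
    field_simp
  have hiff : (π / 2 ≤ x + y) ↔ a * b ≤ 1 := by
    constructor
    · intro h
      have hc : Real.cos (x + y) ≤ 0 :=
        Real.cos_nonpos_of_pi_div_two_le_of_le h (by linarith)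
      have := div_nonpos_of_nonpos_of_nonneg hc (mul_pos hsx hsy).le
      linarith [hd]
    · intro h
      by_contra hlt
      push_neg at hlt
      have hc : 0 < Real.cos (x + y) := Real.cos_pos_of_mem_Ioo ⟨by linarith, hlt⟩
      have := div_pos hc (mul_pos hsx hsy)
      linarith [hd]
  have hval : Real.cot (π - x - y) = (1 - a * b) / (a + b) := by
    have e : π - x - y = π - (x + y) := by ring
    rw [e, Real.cot_eq_cos_div_sin, Real.cos_pi_sub, Real.sin_pi_sub,
        hacos, hbcos]
    have hne : Real.cos x / Real.sin x + Real.cos y / Real.sin y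
        = Real.sin (x + y) / (Real.sin x * Real.sin y) := by
      rw [Real.sin_add]; field_simp; ring
    rw [hne, Real.cos_add, Real.sin_add]
    field_simp
    ring
  have hite : (if π / 2 ≤ x + y then Real.cot (π - x - y) else 0)
      = (if a * b ≤ 1 then (1 - a * b) / (a + b) else 0) := by
    by_cases h : π / 2 ≤ x + y
    · rw [if_pos h, if_pos (hiff.mp h), hval]
    · rw [if_neg h, if_neg (fun hc => h (hiff.mpr hc))]
  rw [hite]
  rcases le_total b a with hba | hab' 
  · exact (min_le_left _ _).trans (cot_aux a b β ha hb hba hβ1 hβ2)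
  · refine (min_le_right _ _).trans ?_
    have h := cot_aux b a β hb ha hab' hβ1 hβ2
    rw [mul_comm b a, add_comm b a] at h
    exact h
end

section
/- There exists an absolute constant C > 0 such that for all x, y ∈ (0, π/2) and all β ∈ [3/2, 2]: cot(y) · 1_{{y ≥ π/3}} ≤ C [ (cot(x) · cot(y))^β + 1_{{x+y ≥ π/2}} · cot(π − x − y) ]. -/
open Real Set

set_option maxHeartbeats 1600000 in
/-- Inequality (5.9) of Lemma 5.2: for `x, y ∈ (0, π/2)` and `β ∈ [3/2, 2]`,
`cot y · 1_{y ≥ π/3} ≤ C ((cot x cot y)^β + 1_{x+y ≥ π/2} cot(π - x - y))`. -/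
theorem cot_indicator_le :
    ∃ C : ℝ, 0 < C ∧
      ∀ x ∈ Ioo (0 : ℝ) (π / 2), ∀ y ∈ Ioo (0 : ℝ) (π / 2),
        ∀ β ∈ Icc (3 / 2 : ℝ) 2,
          (if π / 3 ≤ y then Real.cot y else 0)
            ≤ C * ((Real.cot x * Real.cot y) ^ β
                + (if π / 2 ≤ x + y then Real.cot (π - x - y) else 0)) := by
  refine ⟨4, by norm_num, ?_⟩
  intro x hx y hy β hβ
  obtain ⟨hx0, hx2⟩ := hx
  obtain ⟨hy0, hy2⟩ := hy
  obtain ⟨hβ1, hβ2⟩ := hβ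
  have hpi := Real.pi_pos
  have hsx : 0 < Real.sin x := Real.sin_pos_of_pos_of_lt_pi hx0 (by linarith)
  have hcx : 0 < Real.cos x := Real.cos_pos_of_mem_Ioo ⟨by linarith, hx2⟩
  have hsy : 0 < Real.sin y := Real.sin_pos_of_pos_of_lt_pi hy0 (by linarith)
  have hcy : 0 < Real.cos y := Real.cos_pos_of_mem_Ioo ⟨by linarith, hy2⟩
  have ha0 : 0 < Real.cot y := by
    rw [Real.cot_eq_cos_div_sin]; positivity
  have hb0 : 0 < Real.cot x := by
    rw [Real.cot_eq_cos_div_sin]; positivity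
  have hpow0 : 0 ≤ (Real.cot x * Real.cot y) ^ β :=
    Real.rpow_nonneg (by positivity) β
  have hind : 0 ≤ (if π / 2 ≤ x + y then Real.cot (π - x - y) else 0) := by
    split_ifs with h
    · rw [Real.cot_eq_cos_div_sin]
      apply div_nonneg
      · exact Real.cos_nonneg_of_mem_Icc ⟨by linarith, by linarith⟩
      · exact le_of_lt (Real.sin_pos_of_pos_of_lt_pi (by linarith) (by linarith))
    · exact le_rfl
  by_cases hy3 : π / 3 ≤ y
  swap
  · simp only [hy3, if_neg, not_false_iff]
    positivity
  rw [if_pos hy3]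
  -- a = cot y ≤ 1
  have ha1 : Real.cot y ≤ 1 := by
    rw [Real.cot_eq_cos_div_sin, div_le_one hsy]
    have hcc : Real.cos y ≤ Real.cos (π / 2 - y) := by
      apply Real.cos_le_cos_of_nonneg_of_le_pi (by linarith) (by linarith) (by linarith)
    rw [Real.cos_pi_div_two_sub] at hcc
    linarith
  by_cases hp : (1 : ℝ) / 2 ≤ Real.cot x * Real.cot y
  · -- first term is at least 1/4
    have hq : (1 / 4 : ℝ) ≤ (Real.cot x * Real.cot y) ^ β := by
      rcases le_or_gt (Real.cot x * Real.cot y) 1 with h1 | h1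
      · have h2 : (Real.cot x * Real.cot y) ^ (2 : ℝ) ≤ (Real.cot x * Real.cot y) ^ β :=
          Real.rpow_le_rpow_of_exponent_ge (by positivity) h1 hβ2
        have h3 : ((1 : ℝ) / 2) ^ (2 : ℝ) ≤ (Real.cot x * Real.cot y) ^ (2 : ℝ) :=
          Real.rpow_le_rpow (by norm_num) hp (by norm_num)
        have h4 : ((1 : ℝ) / 2) ^ (2 : ℝ) = 1 / 4 := by
          rw [show (2 : ℝ) = ((2 : ℕ) : ℝ) by norm_num, Real.rpow_natCast]; norm_num
        linarith
      · have h2 : (1 : ℝ) ≤ (Real.cot x * Real.cot y) ^ β :=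
          Real.one_le_rpow h1.le (by linarith)
        linarith
    linarith
  · -- cot x * cot y < 1/2, hence x + y > π/2
    push_neg at hp
    have hab : Real.cos x * Real.cos y < Real.sin x * Real.sin y := by
      have : Real.cot x * Real.cot y < 1 := by linarith
      rw [Real.cot_eq_cos_div_sin, Real.cot_eq_cos_div_sin, div_mul_div_comm,
        div_lt_one (by positivity)] at this
      linarith
    have hxy : π / 2 ≤ x + y := by
      by_contra hcon
      push_neg at hcon
      have : 0 ≤ Real.cos (x + y) :=
        Real.cos_nonneg_of_mem_Icc ⟨by linarith, by linarith⟩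
      rw [Real.cos_add] at this
      linarith
    rw [if_pos hxy]
    have hsxy : 0 < Real.sin (x + y) := Real.sin_pos_of_pos_of_lt_pi (by linarith) (by linarith)
    have hkey : Real.cot (π - x - y)
        = (1 - Real.cot x * Real.cot y) / (Real.cot y + Real.cot x) := by
      rw [show π - x - y = π - (x + y) by ring, Real.cot_eq_cos_div_sin,
        Real.cos_pi_sub, Real.sin_pi_sub, Real.sin_add, Real.cos_add,
        Real.cot_eq_cos_div_sin, Real.cot_eq_cos_div_sin]
      field_simp
      ring
    rw [hkey]
    have hd : 0 < Real.cot y + Real.cot x := by positivity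
    have h1 : Real.cot y * Real.cot y ≤ 1 := by nlinarith
    have h2 : Real.cot y * (Real.cot y + Real.cot x) ≤ 4 * (1 - Real.cot x * Real.cot y) := by
      nlinarith
    have hfin : Real.cot y ≤ 4 * (1 - Real.cot x * Real.cot y) / (Real.cot y + Real.cot x) :=
      (le_div_iff₀ hd).2 h2
    rw [mul_div_assoc] at hfin
    linarith
end

section
/- For every β ∈ (1, 2], the function x ↦ W_{2,β}(x) = K̃_{2,β}(e^x) satisfies W_{2,β}''(x) ≥ 0 for every x > 0; i.e., W_{2,β} is convex on (0, ∞). Equivalently, for every s > 1, s² K̃_{2,β}''(s) + s K̃_{2,β}'(s) ≥ 0. -/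
set_option maxHeartbeats 2000000

open Real Set

/-- The kernel `K̃_{2,β}(s)` from (4.14). -/
noncomputable def Ktilde2 (β s : ℝ) : ℝ :=
  (β / 2) * ((s ^ ((β - 1) / 2) + s ^ (-((β - 1) / 2))) * Real.log |(s + 1) / (s - 1)|
    - 2 * s * (s ^ ((β - 1) / 2) - s ^ (-((β - 1) / 2))) / (s ^ 2 - 1))

/-- `W_{2,β}(x) = K̃_{2,β}(e^x)`. -/
noncomputable def W2 (β x : ℝ) : ℝ := Ktilde2 β (Real.exp x)


lemma hd_log1p (t : ℝ) (h : (1:ℝ)+t ≠ 0) : HasDerivAt (fun t : ℝ => Real.log (1+t)) (1/(1+t)) t := by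
  simpa using ((hasDerivAt_id t).const_add 1).log h

lemma hd_log1m (t : ℝ) (h : (1:ℝ)-t ≠ 0) : HasDerivAt (fun t : ℝ => Real.log (1-t)) (-(1/(1-t))) t := by
  have : HasDerivAt (fun t : ℝ => (1:ℝ) - t) (-1) t := by
    simpa using (hasDerivAt_id t).const_sub 1
  have h2 := this.log h
  simpa [neg_div] using h2

lemma log_lower {u : ℝ} (h0 : 0 ≤ u) (h1 : u < 1) :
    2*u + 2*u^3/3 + 2*u^5/5 ≤ Real.log (1+u) - Real.log (1-u) := by
  set f : ℝ → ℝ := fun t => Real.log (1+t) - Real.log (1-t) - (2*t + 2*t^3/3 + 2*t^5/5) with hf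
  have hmono : MonotoneOn f (Ico (0:ℝ) 1) := by
    have hderiv : ∀ t ∈ interior (Ico (0:ℝ) 1), 0 ≤ deriv f t := by
      intro t ht
      rw [interior_Ico] at ht
      obtain ⟨ht0, ht1⟩ := ht
      have h1t : (0:ℝ) < 1 - t := by linarith
      have h1t' : (0:ℝ) < 1 + t := by linarith
      have d3 : HasDerivAt (fun t : ℝ => 2*t + 2*t^3/3 + 2*t^5/5)
          (2 + 2*(3*t^2)/3 + 2*(5*t^4)/5) t := by
        have h3 := (((hasDerivAt_pow 3 t).const_mul 2).div_const 3)
        have h5 := (((hasDerivAt_pow 5 t).const_mul 2).div_const 5)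
        have h1' := (hasDerivAt_id t).const_mul 2
        have := (h1'.add h3).add h5
        exact this.congr_deriv (by push_cast; ring)
      have df : HasDerivAt f (1/(1+t) - (-(1/(1-t))) - (2 + 2*(3*t^2)/3 + 2*(5*t^4)/5)) t :=
        ((hd_log1p t (ne_of_gt h1t')).sub (hd_log1m t (ne_of_gt h1t))).sub d3
      rw [df.deriv]
      have key2 : 1/(1+t) - (-(1/(1-t))) - (2 + 2*(3*t^2)/3 + 2*(5*t^4)/5)
          = 2*t^6/((1+t)*(1-t)) := by
        field_simp
        ring
      rw [key2]
      positivity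
    apply monotoneOn_of_deriv_nonneg (convex_Ico 0 1) _ _ hderiv
    · intro t ht
      have h1t : (0:ℝ) < 1 - t := by linarith [ht.2]
      have h1t' : (0:ℝ) < 1 + t := by linarith [ht.1]
      exact (((Real.continuousAt_log (ne_of_gt h1t')).comp (by fun_prop)).sub
        ((Real.continuousAt_log (ne_of_gt h1t)).comp (by fun_prop))).sub (by fun_prop)
        |>.continuousWithinAt
    · intro t ht
      rw [interior_Ico] at ht
      have h1t : (0:ℝ) < 1 - t := by linarith [ht.2]
      have h1t' : (0:ℝ) < 1 + t := by linarith [ht.1]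
      have d3 : HasDerivAt (fun t : ℝ => 2*t + 2*t^3/3 + 2*t^5/5)
          (2 + 2*(3*t^2)/3 + 2*(5*t^4)/5) t := by
        have h3 := (((hasDerivAt_pow 3 t).const_mul 2).div_const 3)
        have h5 := (((hasDerivAt_pow 5 t).const_mul 2).div_const 5)
        have h1' := (hasDerivAt_id t).const_mul 2
        have := (h1'.add h3).add h5
        exact this.congr_deriv (by push_cast; ring)
      exact (((hd_log1p t (ne_of_gt h1t')).sub (hd_log1m t (ne_of_gt h1t))).sub
        d3).differentiableAt.differentiableWithinAt
  have h00 : f 0 = 0 := by simp [hf]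
  have := hmono (left_mem_Ico.mpr one_pos) ⟨h0, h1⟩ h0
  rw [h00] at this
  simp only [hf] at this
  linarith

lemma psi_nonneg {a s : ℝ} (ha : 0 ≤ a) (hs : 1 ≤ s) :
    0 ≤ 2*a^2*(s+1)*(15*s^4+5*s^2+3)*(s^2-1)^3
      - 15*s^6*((4+8*a+2*a^2)*s - 2*a^2)*(s^2-1)^2
      + 15*s^8*((20+8*a)*s-(12-8*a))*(s^2-1) - 240*s^10*(s-1) := by
  obtain ⟨t, ht, rfl⟩ : ∃ t, 0 ≤ t ∧ s = 1 + t := ⟨s - 1, by linarith, by ring⟩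
  have key : 2*a^2*((1+t)+1)*(15*(1+t)^4+5*(1+t)^2+3)*((1+t)^2-1)^3
      - 15*(1+t)^6*((4+8*a+2*a^2)*(1+t) - 2*a^2)*((1+t)^2-1)^2
      + 15*(1+t)^8*((20+8*a)*(1+t)-(12-8*a))*((1+t)^2-1) - 240*(1+t)^10*((1+t)-1)
      = 480*a*t^1 + 3840*a*t^2 + 60*t^3 + 13560*a*t^3 + 616*a^2*t^3 + 420*t^4 + 27720*a*t^4 + 2872*a^2*t^4 + 1260*t^5 + 36120*a*t^5 + 6074*a^2*t^5 + 2100*t^6 + 31080*a*t^6 + 7348*a^2*t^6 + 2100*t^7 + 17640*a*t^7 + 5396*a^2*t^7 + 1260*t^8 + 6360*a*t^8 + 2380*a^2*t^8 + 420*t^9 + 1320*a*t^9 + 580*a^2*t^9 + 60*t^10 + 120*a*t^10 + 60*a^2*t^10 := by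
    ring
  rw [key]
  have h2 : 0 ≤ a^2 := sq_nonneg a
  have hp : ∀ n : ℕ, 0 ≤ t^n := fun n => pow_nonneg ht n
  have hap : ∀ n : ℕ, 0 ≤ a * t^n := fun n => mul_nonneg ha (hp n)
  have ha2p : ∀ n : ℕ, 0 ≤ a^2 * t^n := fun n => mul_nonneg h2 (hp n)
  nlinarith [hap 1, hap 2, hap 3, hap 4, hap 5, hap 6, hap 7, hap 8, hap 9, hap 10,
    ha2p 3, ha2p 4, ha2p 5, ha2p 6, ha2p 7, ha2p 8, ha2p 9, ha2p 10,
    hp 3, hp 4, hp 5, hp 6, hp 7, hp 8, hp 9, hp 10]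



noncomputable def D1f (β s : ℝ) : ℝ :=
  (β/2) * ( ((β-1)/2) * (s ^ ((β-1)/2) - s ^ (-((β-1)/2))) / s
        * (Real.log (s+1) - Real.log (s-1))
    - 4 * s ^ ((β-1)/2) / (s^2-1)
    - (β-1) * (s ^ ((β-1)/2) + s ^ (-((β-1)/2))) / (s^2-1)
    + 4 * s^2 * (s ^ ((β-1)/2) - s ^ (-((β-1)/2))) / (s^2-1)^2 )

noncomputable def D2f (β s : ℝ) : ℝ :=
  (β/2) * ( ((β-1)/2) * ((((β-1)/2)-1) * s ^ ((β-1)/2) + (((β-1)/2)+1) * s ^ (-((β-1)/2))) / s^2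
        * (Real.log (s+1) - Real.log (s-1))
    - 2 * ((β-1)/2) * (1+((β-1)/2)) * (s ^ ((β-1)/2) - s ^ (-((β-1)/2))) / (s*(s^2-1))
    - 4 * ((β-1)/2) * s ^ ((β-1)/2) / (s*(s^2-1))
    + 8 * s * s ^ ((β-1)/2) / (s^2-1)^2
    + 8 * ((β-1)/2) * s * (s ^ ((β-1)/2) + s ^ (-((β-1)/2))) / (s^2-1)^2
    + 8 * s * (s ^ ((β-1)/2) - s ^ (-((β-1)/2))) / (s^2-1)^2
    - 16 * s^3 * (s ^ ((β-1)/2) - s ^ (-((β-1)/2))) / (s^2-1)^3 )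

lemma hasDerivAt_K {β s : ℝ} (hs : 1 < s) : HasDerivAt (Ktilde2 β) (D1f β s) s := by
  have hs0 : 0 < s := by linarith
  have hs0' : s ≠ 0 := ne_of_gt hs0
  have hsm : s - 1 ≠ 0 := by intro h; nlinarith
  have hsp : s + 1 ≠ 0 := by intro h; nlinarith
  have hs2 : s^2 - 1 ≠ 0 := by intro h; nlinarith
  set c : ℝ := (β-1)/2 with hc
  -- the "nice" version
  set N : ℝ → ℝ := fun t => (β/2) * ((t ^ c + t ^ (-c)) * (Real.log (t+1) - Real.log (t-1))
      - 2 * t * (t ^ c - t ^ (-c)) / (t ^ 2 - 1)) with hN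
  have hev : Ktilde2 β =ᶠ[nhds s] N := by
    filter_upwards [isOpen_Ioi.mem_nhds hs] with t (ht : 1 < t)
    have htm : t - 1 ≠ 0 := by intro h; nlinarith
    have htp : t + 1 ≠ 0 := by intro h; nlinarith
    simp only [Ktilde2, hN, Real.log_abs, Real.log_div htp htm, hc]
  have hp : HasDerivAt (fun t : ℝ => t ^ c) (c * s ^ (c-1)) s :=
    Real.hasDerivAt_rpow_const (Or.inl hs0')
  have hq : HasDerivAt (fun t : ℝ => t ^ (-c)) (-c * s ^ (-c-1)) s :=
    Real.hasDerivAt_rpow_const (Or.inl hs0')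
  have hl1 : HasDerivAt (fun t : ℝ => Real.log (t+1)) (1/(s+1)) s := by
    simpa using ((hasDerivAt_id s).add_const 1).log hsp
  have hl2 : HasDerivAt (fun t : ℝ => Real.log (t-1)) (1/(s-1)) s := by
    simpa using ((hasDerivAt_id s).sub_const 1).log hsm
  have hnum : HasDerivAt (fun t : ℝ => 2 * t * (t ^ c - t ^ (-c)))
      (2 * (s ^ c - s ^ (-c)) + 2 * s * (c * s ^ (c-1) - (-c * s ^ (-c-1)))) s := by
    have := ((hasDerivAt_id s).const_mul 2).mul (hp.sub hq)
    simp only [id_eq] at this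
    exact this.congr_deriv (by simp only [Pi.sub_apply]; ring)
  have hden : HasDerivAt (fun t : ℝ => t ^ 2 - 1) (2*s) s := by
    simpa using (hasDerivAt_pow 2 s).sub_const 1
  have hN' : HasDerivAt N
      ((β/2) * (((c * s ^ (c-1) + -c * s ^ (-c-1)) * (Real.log (s+1) - Real.log (s-1))
        + (s ^ c + s ^ (-c)) * (1/(s+1) - 1/(s-1)))
        - ((2 * (s ^ c - s ^ (-c)) + 2 * s * (c * s ^ (c-1) - (-c * s ^ (-c-1)))) * (s^2-1)
            - 2 * s * (s ^ c - s ^ (-c)) * (2*s)) / (s^2-1)^2)) s := by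
    exact (((hp.add hq).mul (hl1.sub hl2)).sub (hnum.div hden hs2)).const_mul (β/2)
  have heq : (β/2) * (((c * s ^ (c-1) + -c * s ^ (-c-1)) * (Real.log (s+1) - Real.log (s-1))
        + (s ^ c + s ^ (-c)) * (1/(s+1) - 1/(s-1)))
        - ((2 * (s ^ c - s ^ (-c)) + 2 * s * (c * s ^ (c-1) - (-c * s ^ (-c-1)))) * (s^2-1)
            - 2 * s * (s ^ c - s ^ (-c)) * (2*s)) / (s^2-1)^2) = D1f β s := by
    rw [D1f, ← hc]
    have e1 : s ^ (c-1) = s ^ c / s := by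
      rw [Real.rpow_sub hs0, Real.rpow_one]
    have e2 : s ^ (-c-1) = s ^ (-c) / s := by
      rw [Real.rpow_sub hs0, Real.rpow_one]
    have e3 : s ^ (-c) = (s ^ c)⁻¹ := Real.rpow_neg hs0.le c
    rw [e1, e2, e3]
    have hP : s ^ c ≠ 0 := ne_of_gt (rpow_pos_of_pos hs0 c)
    field_simp
    ring
  rw [heq] at hN'
  exact hN'.congr_of_eventuallyEq hev

lemma hasDerivAt_D1 {β s : ℝ} (hs : 1 < s) : HasDerivAt (D1f β) (D2f β s) s := by
  have hs0 : 0 < s := by linarith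
  have hs0' : s ≠ 0 := ne_of_gt hs0
  have hsm : s - 1 ≠ 0 := by intro h; nlinarith
  have hsp : s + 1 ≠ 0 := by intro h; nlinarith
  have hs2 : s^2 - 1 ≠ 0 := by intro h; nlinarith
  set c : ℝ := (β-1)/2 with hc
  have hp : HasDerivAt (fun t : ℝ => t ^ c) (c * s ^ (c-1)) s :=
    Real.hasDerivAt_rpow_const (Or.inl hs0')
  have hq : HasDerivAt (fun t : ℝ => t ^ (-c)) (-c * s ^ (-c-1)) s :=
    Real.hasDerivAt_rpow_const (Or.inl hs0')
  have hl1 : HasDerivAt (fun t : ℝ => Real.log (t+1)) (1/(s+1)) s := by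
    simpa using ((hasDerivAt_id s).add_const 1).log hsp
  have hl2 : HasDerivAt (fun t : ℝ => Real.log (t-1)) (1/(s-1)) s := by
    simpa using ((hasDerivAt_id s).sub_const 1).log hsm
  have hden : HasDerivAt (fun t : ℝ => t ^ 2 - 1) (2*s) s := by
    simpa using (hasDerivAt_pow 2 s).sub_const 1
  have hU := ((hp.sub hq).const_mul c).div (hasDerivAt_id s) hs0'
  have hT2 := (hp.const_mul (4:ℝ)).div hden hs2
  have hT3 := ((hp.add hq).const_mul (β-1)).div hden hs2
  have hnum4 := ((hasDerivAt_pow 2 s).const_mul (4:ℝ)).mul (hp.sub hq)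
  have hT4 := hnum4.div (hden.pow 2) (pow_ne_zero 2 hs2)
  have H := ((((hU.mul (hl1.sub hl2)).sub hT2).sub hT3).add hT4).const_mul (β/2)
  refine H.congr_deriv ?_
  · rw [D2f, ← hc]
    have e1 : s ^ (c-1) = s ^ c / s := by
      rw [Real.rpow_sub hs0, Real.rpow_one]
    have e2 : s ^ (-c-1) = s ^ (-c) / s := by
      rw [Real.rpow_sub hs0, Real.rpow_one]
    have e3 : s ^ (-c) = (s ^ c)⁻¹ := Real.rpow_neg hs0.le c
    simp only [id_eq, Pi.sub_apply, Pi.add_apply, Pi.mul_apply, Pi.div_apply, Pi.pow_apply,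
      Nat.cast_ofNat, Nat.reduceSub, pow_one, e1, e2, e3]
    have hP : s ^ c ≠ 0 := ne_of_gt (rpow_pos_of_pos hs0 c)
    field_simp
    rw [hc]
    ring

lemma key_pos {β s : ℝ} (hβ : β ∈ Ioc (1:ℝ) 2) (hs : 1 < s) :
    0 ≤ s^2 * D2f β s + s * D1f β s := by
  obtain ⟨hβ1, hβ2⟩ := hβ
  set a : ℝ := (β-1)/2 with ha_def
  have ha : 0 ≤ a := by simp only [ha_def]; linarith
  have ha2 : a ≤ 1/2 := by simp only [ha_def]; linarith
  have hs0 : 0 < s := by linarith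
  have hs0' : s ≠ 0 := ne_of_gt hs0
  have hs2 : 0 < s^2 - 1 := by nlinarith
  have hs2' : s^2 - 1 ≠ 0 := ne_of_gt hs2
  set P : ℝ := s ^ a with hP_def
  set Q : ℝ := s ^ (-a) with hQ_def
  have hPpos : 0 < P := rpow_pos_of_pos hs0 a
  have hQP : Q = P⁻¹ := by rw [hQ_def, hP_def, Real.rpow_neg hs0.le]
  have hPQ1 : P * Q = 1 := by
    rw [hQP]; exact mul_inv_cancel₀ (ne_of_gt hPpos)
  -- P ≤ s * Q
  have hPsQ : P ≤ s * Q := by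
    have h1 : P ≤ s ^ (1 - a) := by
      rw [hP_def]
      exact Real.rpow_le_rpow_of_exponent_le hs.le (by linarith)
    have h2 : s ^ (1 - a) = s * Q := by
      rw [Real.rpow_sub hs0, Real.rpow_one, hQP, div_eq_mul_inv]
    linarith [h1, h2 ▸ h1]
  set L : ℝ := Real.log (s+1) - Real.log (s-1) with hL_def
  -- lower bound for L
  have hL : 2/s + 2/(3*s^3) + 2/(5*s^5) ≤ L := by
    have hu0 : (0:ℝ) ≤ 1/s := by positivity
    have hu1 : 1/s < 1 := by rw [div_lt_one hs0]; exact hs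
    have := log_lower hu0 hu1
    have e1 : (1:ℝ) + 1/s = (s+1)/s := by field_simp
    have e2 : (1:ℝ) - 1/s = (s-1)/s := by field_simp
    rw [e1, e2, Real.log_div (by linarith) hs0', Real.log_div (by linarith) hs0'] at this
    have : 2*(1/s) + 2*(1/s)^3/3 + 2*(1/s)^5/5 ≤ L := by rw [hL_def]; linarith
    calc 2/s + 2/(3*s^3) + 2/(5*s^5)
        = 2*(1/s) + 2*(1/s)^3/3 + 2*(1/s)^5/5 := by field_simp
      _ ≤ L := this
  set A : ℝ := 2*a^2*(15*s^4+5*s^2+3)*(s^2-1)^3 - 15*s^6*(4+8*a+2*a^2)*(s^2-1)^2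
      + 15*s^8*(20+8*a)*(s^2-1) - 240*s^10 with hA_def
  set B : ℝ := 2*a^2*(15*s^4+5*s^2+3)*(s^2-1)^3 + 30*a^2*s^6*(s^2-1)^2
      - 15*s^8*(12-8*a)*(s^2-1) + 240*s^10 with hB_def
  have hB : 0 ≤ B := by
    have hBeq : B = 2*a^2*(15*s^4+5*s^2+3)*(s^2-1)^3 + 30*a^2*s^6*(s^2-1)^2
        + 60*s^8*(s^2+3) + 120*a*s^8*(s^2-1) := by rw [hB_def]; ring
    rw [hBeq]
    have t1 : 0 ≤ 2*a^2*(15*s^4+5*s^2+3)*(s^2-1)^3 := by positivity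
    have t2 : 0 ≤ 30*a^2*s^6*(s^2-1)^2 := by positivity
    have t3 : 0 ≤ 60*s^8*(s^2+3) := by positivity
    have t4 : 0 ≤ 120*a*s^8*(s^2-1) := by
      apply mul_nonneg (by positivity) hs2.le
    linarith
  have hΨ : 0 ≤ s*A + B := by
    have := psi_nonneg ha hs.le
    have e : s*A + B = 2*a^2*(s+1)*(15*s^4+5*s^2+3)*(s^2-1)^3
      - 15*s^6*((4+8*a+2*a^2)*s - 2*a^2)*(s^2-1)^2
      + 15*s^8*((20+8*a)*s-(12-8*a))*(s^2-1) - 240*s^10*(s-1) := by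
      rw [hA_def, hB_def]; ring
    linarith [e ▸ this]
  have hM : 0 ≤ A*P + B*Q := by
    have hrw : A*P + B*Q = (s*A + B)*(P/s) + B*(Q - P/s) := by field_simp; ring
    rw [hrw]
    have h1 : 0 ≤ (s*A + B)*(P/s) := mul_nonneg hΨ (by positivity)
    have h2 : 0 ≤ B*(Q - P/s) := by
      apply mul_nonneg hB
      rw [sub_nonneg, div_le_iff₀ hs0]
      linarith [hPsQ]
    linarith
  -- main identity
  have hEq : (s^2 * D2f β s + s * D1f β s) * (15*s^5*(s^2-1)^3)
      = (β/2) * ( (a^2*(P+Q)*(s^2-1)^3) * (15*s^5*L - 2*(15*s^4+5*s^2+3))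
        + (A*P + B*Q) ) := by
    rw [D1f, D2f, hA_def, hB_def]
    simp only [← ha_def, ← hP_def, ← hQ_def, ← hL_def]
    rw [hQP]
    field_simp
    ring
  have hfinal : 0 ≤ (s^2 * D2f β s + s * D1f β s) * (15*s^5*(s^2-1)^3) := by
    rw [hEq]
    apply mul_nonneg (by linarith)
    have h1 : 0 ≤ (a^2*(P+Q)*(s^2-1)^3) * (15*s^5*L - 2*(15*s^4+5*s^2+3)) := by
      apply mul_nonneg
      · have : 0 < Q := rpow_pos_of_pos hs0 _
        positivity
      · have h15 : 15*s^5*(2/s + 2/(3*s^3) + 2/(5*s^5)) = 2*(15*s^4+5*s^2+3) := by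
          field_simp; ring
        have := mul_le_mul_of_nonneg_left hL (by positivity : (0:ℝ) ≤ 15*s^5)
        rw [h15] at this
        linarith
    linarith [hM]
  have hpos : 0 < 15*s^5*(s^2-1)^3 := by
    apply mul_pos (by positivity)
    positivity
  rw [mul_comm] at hfinal
  exact nonneg_of_mul_nonneg_right hfinal hpos

/-- Lemma 4.3: for every `β ∈ (1, 2]`, the kernel `W_{2,β}` is convex on `(0, ∞)`;
equivalently `s² K̃_{2,β}''(s) + s K̃_{2,β}'(s) ≥ 0` for `s > 1`. -/
theorem W2_convex :
    ∀ β ∈ Ioc (1 : ℝ) 2,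
      (∀ x : ℝ, 0 < x → 0 ≤ deriv (deriv (W2 β)) x) ∧
      (∀ s : ℝ, 1 < s →
        0 ≤ s ^ 2 * deriv (deriv (Ktilde2 β)) s + s * deriv (Ktilde2 β) s) := by
  intro β hβ
  have hK2 : ∀ s : ℝ, 1 < s → deriv (deriv (Ktilde2 β)) s = D2f β s := by
    intro s hs
    have hev : deriv (Ktilde2 β) =ᶠ[nhds s] D1f β := by
      filter_upwards [isOpen_Ioi.mem_nhds hs] with t (ht : 1 < t)
      exact (hasDerivAt_K ht).deriv
    rw [Filter.EventuallyEq.deriv_eq hev]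
    exact (hasDerivAt_D1 hs).deriv
  constructor
  · intro x hx
    have hsx : 1 < Real.exp x := by
      calc (1:ℝ) = Real.exp 0 := (Real.exp_zero).symm
        _ < Real.exp x := Real.exp_lt_exp.mpr hx
    have hW1 : ∀ y : ℝ, 0 < y →
        HasDerivAt (W2 β) (D1f β (Real.exp y) * Real.exp y) y := by
      intro y hy
      have h1 : 1 < Real.exp y := by
        calc (1:ℝ) = Real.exp 0 := (Real.exp_zero).symm
          _ < Real.exp y := Real.exp_lt_exp.mpr hy
      exact (hasDerivAt_K h1).comp y (Real.hasDerivAt_exp y)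
    have hev : deriv (W2 β) =ᶠ[nhds x]
        (fun y => D1f β (Real.exp y) * Real.exp y) := by
      filter_upwards [isOpen_Ioi.mem_nhds hx] with y (hy : 0 < y)
      exact (hW1 y hy).deriv
    rw [Filter.EventuallyEq.deriv_eq hev]
    have h2 : HasDerivAt (fun y => D1f β (Real.exp y) * Real.exp y)
        ((D2f β (Real.exp x) * Real.exp x) * Real.exp x
          + D1f β (Real.exp x) * Real.exp x) x :=
      ((hasDerivAt_D1 hsx).comp x (Real.hasDerivAt_exp x)).mul (Real.hasDerivAt_exp x)
    rw [h2.deriv]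
    have hkey := key_pos hβ hsx
    nlinarith [hkey]
  · intro s hs
    rw [hK2 s hs, (hasDerivAt_K hs).deriv]
    exact key_pos hβ hs
end

section
/- There exists an absolute constant C > 0 such that for every α ∈ (9/10, 1): the integral I(α) = (1/π) ∫_0^π (sin x)^α cot(x/2) dx is finite and strictly positive, (1/π) ∫_0^π |(sin x)^α − sin x| · cot(x/2) dx ≤ C (1−α), and |c_α − 1| ≤ C (1−α), where c_α = I(α)^{−1}. -/
open MeasureTheory Real Set

private lemma neg_log_le' {s : ℝ} (hs0 : 0 < s) : -Real.log s ≤ 20 * s ^ (-(1:ℝ)/20) := by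
  have hp : 0 < s ^ (-(1:ℝ)/20) := Real.rpow_pos_of_pos hs0 _
  have h := Real.log_le_sub_one_of_pos hp
  rw [Real.log_rpow hs0] at h
  linarith

private lemma diff_bound' {s α : ℝ} (hs0 : 0 < s) (hs1 : s ≤ 1) (hα9 : 9/10 ≤ α)
    (hα1 : α ≤ 1) : s ^ α - s ≤ 20 * (1 - α) * s ^ ((17:ℝ)/20) := by
  have hpow : (0:ℝ) ≤ s ^ α := (Real.rpow_pos_of_pos hs0 α).le
  have h1 : s ^ α - s = s ^ α * (1 - s ^ (1 - α)) := by
    rw [mul_sub, mul_one, ← Real.rpow_add hs0]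
    norm_num
  have h2 : 1 - s ^ (1 - α) ≤ (1 - α) * (-Real.log s) := by
    rw [Real.rpow_def_of_pos hs0]
    have := Real.add_one_le_exp (Real.log s * (1 - α))
    linarith
  have h3 : s ^ α * (-Real.log s) ≤ 20 * s ^ ((17:ℝ)/20) := by
    calc s ^ α * (-Real.log s) ≤ s ^ α * (20 * s ^ (-(1:ℝ)/20)) :=
          mul_le_mul_of_nonneg_left (neg_log_le' hs0) hpow
      _ = 20 * s ^ (α + -(1:ℝ)/20) := by rw [Real.rpow_add hs0]; ring
      _ ≤ 20 * s ^ ((17:ℝ)/20) := by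
          have := Real.rpow_le_rpow_of_exponent_ge hs0 hs1
            (show (17:ℝ)/20 ≤ α + -(1:ℝ)/20 by linarith)
          linarith
  calc s ^ α - s = s ^ α * (1 - s ^ (1-α)) := h1
    _ ≤ s ^ α * ((1-α) * (-Real.log s)) := mul_le_mul_of_nonneg_left h2 hpow
    _ = (1-α) * (s ^ α * (-Real.log s)) := by ring
    _ ≤ (1-α) * (20 * s ^ ((17:ℝ)/20)) := mul_le_mul_of_nonneg_left h3 (by linarith)
    _ = 20 * (1-α) * s ^ ((17:ℝ)/20) := by ring

private lemma half_mem' {x : ℝ} (hx : x ∈ Ioo (0:ℝ) π) :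
    0 < Real.sin (x/2) ∧ 0 < Real.cos (x/2) := by
  obtain ⟨h0, h1⟩ := hx
  constructor
  · exact Real.sin_pos_of_pos_of_lt_pi (by linarith) (by linarith [Real.pi_pos])
  · exact Real.cos_pos_of_mem_Ioo ⟨by linarith [Real.pi_pos], by linarith⟩

private lemma cot_half_pos' {x : ℝ} (hx : x ∈ Ioo (0:ℝ) π) : 0 < Real.cot (x/2) := by
  obtain ⟨hs, hc⟩ := half_mem' hx
  rw [Real.cot_eq_cos_div_sin]
  positivity

private lemma sin_mem' {x : ℝ} (hx : x ∈ Ioo (0:ℝ) π) :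
    0 < Real.sin x ∧ Real.sin x ≤ 1 :=
  ⟨Real.sin_pos_of_pos_of_lt_pi hx.1 hx.2, Real.sin_le_one x⟩

private lemma sin_double' (x : ℝ) : Real.sin x = 2 * Real.sin (x/2) * Real.cos (x/2) := by
  rw [← Real.sin_two_mul]; ring_nf

private lemma g_bound' {x : ℝ} (hx : x ∈ Ioo (0:ℝ) π) :
    Real.sin x ^ ((17:ℝ)/20) * Real.cot (x/2) ≤ 2 * π * x ^ (-(3:ℝ)/20) := by
  obtain ⟨hs2, hc2⟩ := half_mem' hx
  obtain ⟨hsp, hsle⟩ := sin_mem' hx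
  have hx0 := hx.1
  have hπ := Real.pi_pos
  -- cot(x/2) ≤ 1 / sin(x/2)
  have hcot : Real.cot (x/2) ≤ 1 / Real.sin (x/2) := by
    rw [Real.cot_eq_cos_div_sin]
    gcongr
    exact Real.cos_le_one _
  -- sin x ≤ 2 sin(x/2)
  have hsin2 : Real.sin x ≤ 2 * Real.sin (x/2) := by
    rw [sin_double']
    nlinarith [Real.cos_le_one (x/2)]
  -- sin x ^ (17/20) ≤ 2^(17/20) * sin(x/2)^(17/20)
  have h1 : Real.sin x ^ ((17:ℝ)/20) ≤ 2 ^ ((17:ℝ)/20) * Real.sin (x/2) ^ ((17:ℝ)/20) := by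
    rw [← Real.mul_rpow (by norm_num) hs2.le]
    exact Real.rpow_le_rpow hsp.le hsin2 (by norm_num)
  -- sin(x/2) ≥ x/π
  have hjordan : x / π ≤ Real.sin (x/2) := by
    have := Real.mul_le_sin (x := x/2) (by linarith) (by linarith [hx.2])
    calc x / π = 2/π * (x/2) := by ring
      _ ≤ Real.sin (x/2) := this
  have hxπ : 0 < x / π := div_pos hx0 hπ
  -- sin(x/2)^(17/20) * (1/sin(x/2)) = sin(x/2)^(-3/20)
  have h2 : Real.sin (x/2) ^ ((17:ℝ)/20) * (1 / Real.sin (x/2))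
      = Real.sin (x/2) ^ (-(3:ℝ)/20) := by
    rw [one_div, ← Real.rpow_neg_one (Real.sin (x/2)), ← Real.rpow_add hs2]
    norm_num
  have hdiv : (x/π) ^ (-(3:ℝ)/20) = x ^ (-(3:ℝ)/20) * π ^ ((3:ℝ)/20) := by
    rw [Real.div_rpow hx0.le hπ.le,
      show (-(3:ℝ)/20) = -((3:ℝ)/20) by norm_num, Real.rpow_neg hπ.le]
    field_simp
  have e1 : (2:ℝ) ^ ((17:ℝ)/20) ≤ 2 := by
    calc (2:ℝ) ^ ((17:ℝ)/20) ≤ (2:ℝ) ^ (1:ℝ) :=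
          Real.rpow_le_rpow_of_exponent_le one_le_two (by norm_num)
      _ = 2 := Real.rpow_one 2
  have e2 : π ^ ((3:ℝ)/20) ≤ π := by
    calc π ^ ((3:ℝ)/20) ≤ π ^ (1:ℝ) :=
          Real.rpow_le_rpow_of_exponent_le (by linarith [Real.pi_gt_three]) (by norm_num)
      _ = π := Real.rpow_one π
  have hcotpos := cot_half_pos' hx
  calc Real.sin x ^ ((17:ℝ)/20) * Real.cot (x/2)
      ≤ (2 ^ ((17:ℝ)/20) * Real.sin (x/2) ^ ((17:ℝ)/20)) * (1 / Real.sin (x/2)) := by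
        apply mul_le_mul h1 hcot hcotpos.le (by positivity)
    _ = 2 ^ ((17:ℝ)/20) * (Real.sin (x/2) ^ ((17:ℝ)/20) * (1 / Real.sin (x/2))) := by ring
    _ = 2 ^ ((17:ℝ)/20) * Real.sin (x/2) ^ (-(3:ℝ)/20) := by rw [h2]
    _ ≤ 2 ^ ((17:ℝ)/20) * (x/π) ^ (-(3:ℝ)/20) :=
        mul_le_mul_of_nonneg_left
          (Real.rpow_le_rpow_of_nonpos hxπ hjordan (by norm_num)) (by positivity)
    _ = 2 ^ ((17:ℝ)/20) * π ^ ((3:ℝ)/20) * x ^ (-(3:ℝ)/20) := by rw [hdiv]; ring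
    _ ≤ 2 * π * x ^ (-(3:ℝ)/20) := by
        have hxp : (0:ℝ) < x ^ (-(3:ℝ)/20) := Real.rpow_pos_of_pos hx0 _
        have p1 : (0:ℝ) < (2:ℝ) ^ ((17:ℝ)/20) := Real.rpow_pos_of_pos (by norm_num) _
        have p2 : (0:ℝ) < π ^ ((3:ℝ)/20) := Real.rpow_pos_of_pos hπ _
        have := mul_le_mul_of_nonneg_right
          (mul_le_mul e1 e2 p2.le (by norm_num : (0:ℝ) ≤ 2)) hxp.le
        linarith


private lemma meas_f' {α : ℝ} (hα : 0 ≤ α) :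
    AEStronglyMeasurable (fun x => Real.sin x ^ α * Real.cot (x / 2))
      (volume.restrict (Ioo (0:ℝ) π)) := by
  have h2 : Measurable fun x : ℝ => Real.cot (x/2) := by
    have he : (fun x : ℝ => Real.cot (x/2)) = fun x => Real.cos (x/2) / Real.sin (x/2) := by
      funext x; exact Real.cot_eq_cos_div_sin _
    rw [he]
    exact (Real.measurable_cos.comp (measurable_id.div_const 2)).div
      (Real.measurable_sin.comp (measurable_id.div_const 2))
  have h1 : Measurable fun x : ℝ => Real.sin x ^ α :=
    ((Real.continuous_rpow_const hα).comp Real.continuous_sin).measurable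
  exact (h1.mul h2).aestronglyMeasurable

private lemma G_integrable' : IntegrableOn (fun x : ℝ => 2 * π * x ^ (-(3:ℝ)/20)) (Ioo (0:ℝ) π) := by
  have h : IntervalIntegrable (fun x : ℝ => x ^ (-(3:ℝ)/20)) volume 0 π :=
    intervalIntegral.intervalIntegrable_rpow' (by norm_num)
  have h2 := (intervalIntegrable_iff_integrableOn_Ioo_of_le Real.pi_pos.le).mp h
  exact h2.const_mul _

private lemma f_integrable' {α : ℝ} (hα9 : 17/20 ≤ α) (hα1 : α ≤ 1) :
    IntegrableOn (fun x => Real.sin x ^ α * Real.cot (x / 2)) (Ioo (0:ℝ) π) := by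
  apply Integrable.mono' G_integrable' (meas_f' (by linarith : (0:ℝ) ≤ α))
  rw [ae_restrict_iff' measurableSet_Ioo]
  filter_upwards with x hx
  obtain ⟨hsp, hsle⟩ := sin_mem' hx
  have hcot := cot_half_pos' hx
  have hnn : 0 ≤ Real.sin x ^ α * Real.cot (x/2) := by positivity
  rw [Real.norm_eq_abs, abs_of_nonneg hnn]
  calc Real.sin x ^ α * Real.cot (x/2)
      ≤ Real.sin x ^ ((17:ℝ)/20) * Real.cot (x/2) :=
        mul_le_mul_of_nonneg_right
          (Real.rpow_le_rpow_of_exponent_ge hsp hsle hα9) hcot.le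
    _ ≤ 2 * π * x ^ (-(3:ℝ)/20) := g_bound' hx

private lemma sin_cot' {x : ℝ} (hx : x ∈ Ioo (0:ℝ) π) :
    Real.sin x * Real.cot (x/2) = 1 + Real.cos x := by
  obtain ⟨hs2, hc2⟩ := half_mem' hx
  rw [Real.cot_eq_cos_div_sin]
  have hsin := sin_double' x
  have hcos : Real.cos x = 2 * Real.cos (x/2)^2 - 1 := by
    have h := Real.cos_two_mul (x/2)
    rw [show 2*(x/2) = x by ring] at h
    linarith
  field_simp
  rw [hsin, hcos]
  ring

private lemma int_one_cos : (∫ x in Ioo (0:ℝ) π, (1 + Real.cos x)) = π := by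
  rw [← integral_Ioc_eq_integral_Ioo,
    ← intervalIntegral.integral_of_le Real.pi_pos.le]
  have h1 : IntervalIntegrable (fun _ : ℝ => (1:ℝ)) volume 0 π := intervalIntegrable_const
  have h2 : IntervalIntegrable Real.cos volume 0 π :=
    Real.continuous_cos.intervalIntegrable 0 π
  rw [intervalIntegral.integral_add h1 h2]
  simp

/-- Estimate (6.18) from the proof of Lemma 6.1: for `α ∈ (9/10, 1)`, the normalizing
integral `I(α) = (1/π)∫_0^π (sin x)^α cot(x/2) dx` is finite and positive,
`(1/π)∫_0^π |(sin x)^α - sin x| cot(x/2) dx ≤ C(1-α)`, and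
`|c_α - 1| ≤ C(1-α)` where `c_α = I(α)⁻¹`. -/
theorem c_alpha_estimate :
    ∃ C : ℝ, 0 < C ∧
      ∀ α : ℝ, 9 / 10 < α → α < 1 →
        IntegrableOn (fun x => Real.sin x ^ α * Real.cot (x / 2)) (Ioo (0 : ℝ) π) ∧
        0 < (1 / π) * ∫ x in (0:ℝ)..π, Real.sin x ^ α * Real.cot (x / 2) ∧
        (1 / π) * (∫ x in (0:ℝ)..π, |Real.sin x ^ α - Real.sin x| * Real.cot (x / 2))
          ≤ C * (1 - α) ∧
        |((1 / π) * ∫ x in (0:ℝ)..π, Real.sin x ^ α * Real.cot (x / 2))⁻¹ - 1|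
          ≤ C * (1 - α) := by
  have hπ := Real.pi_pos
  set JG : ℝ := ∫ x in Ioo (0:ℝ) π, 2 * π * x ^ (-(3:ℝ)/20) with hJGdef
  have hJGnn : 0 ≤ JG :=
    setIntegral_nonneg measurableSet_Ioo (fun x hx => by
      have hx0 := hx.1; positivity)
  refine ⟨20/π * JG + 1, by positivity, ?_⟩
  intro α hα9 hα1
  have hα0 : (17:ℝ)/20 ≤ α := by linarith
  have hint : IntegrableOn (fun x => Real.sin x ^ α * Real.cot (x / 2)) (Ioo (0:ℝ) π) :=
    f_integrable' hα0 hα1.le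
  have hint1 : IntegrableOn (fun x => Real.sin x * Real.cot (x / 2)) (Ioo (0:ℝ) π) := by
    have h := f_integrable' (α := 1) (by norm_num) le_rfl
    simpa [Real.rpow_one] using h
  have hintcos : IntegrableOn (fun x => 1 + Real.cos x) (Ioo (0:ℝ) π) :=
    (intervalIntegrable_iff_integrableOn_Ioo_of_le hπ.le).mp
      ((continuous_const.add Real.continuous_cos).intervalIntegrable 0 π)
  -- pointwise: sin x ≤ sin x ^ α on Ioo
  have hmono : ∀ x ∈ Ioo (0:ℝ) π, Real.sin x ≤ Real.sin x ^ α := by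
    intro x hx
    obtain ⟨hsp, hsle⟩ := sin_mem' hx
    have := Real.rpow_le_rpow_of_exponent_ge hsp hsle hα1.le
    rwa [Real.rpow_one] at this
  -- ∫_Ioo sin·cot = π
  have hf1 : (∫ x in Ioo (0:ℝ) π, Real.sin x * Real.cot (x/2)) = π := by
    rw [setIntegral_congr_fun measurableSet_Ioo (fun x hx => sin_cot' hx)]
    exact int_one_cos
  -- J ≥ π
  have hJ : π ≤ ∫ x in Ioo (0:ℝ) π, Real.sin x ^ α * Real.cot (x/2) := by
    refine le_trans (le_of_eq hf1.symm)
      (setIntegral_mono_on hint1 hint measurableSet_Ioo ?_)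
    intro x hx
    exact mul_le_mul_of_nonneg_right (hmono x hx) (cot_half_pos' hx).le
  -- the diff function agrees with the difference on Ioo
  have hEq : EqOn (fun x => Real.sin x ^ α * Real.cot (x/2) - Real.sin x * Real.cot (x/2))
      (fun x => |Real.sin x ^ α - Real.sin x| * Real.cot (x/2)) (Ioo (0:ℝ) π) := by
    intro x hx
    have h := hmono x hx
    simp only
    rw [abs_of_nonneg (by linarith)]
    ring
  have hd_int : IntegrableOn (fun x => |Real.sin x ^ α - Real.sin x| * Real.cot (x/2))
      (Ioo (0:ℝ) π) := by
    refine (hint.sub hint1).congr ?_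
    refine (ae_restrict_iff' measurableSet_Ioo).2 (ae_of_all _ fun x hx => ?_)
    simpa [Pi.sub_apply] using hEq hx
  -- ∫ diff = J - π
  have hd_eq : (∫ x in Ioo (0:ℝ) π, |Real.sin x ^ α - Real.sin x| * Real.cot (x/2))
      = (∫ x in Ioo (0:ℝ) π, Real.sin x ^ α * Real.cot (x/2)) - π := by
    rw [← setIntegral_congr_fun measurableSet_Ioo hEq, integral_sub hint hint1, hf1]
  -- ∫ diff ≤ 20(1-α) JG
  have hd_le : (∫ x in Ioo (0:ℝ) π, |Real.sin x ^ α - Real.sin x| * Real.cot (x/2))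
      ≤ 20 * (1 - α) * JG := by
    have hR : IntegrableOn (fun x : ℝ => 20 * (1-α) * (2 * π * x ^ (-(3:ℝ)/20)))
        (Ioo (0:ℝ) π) := G_integrable'.const_mul _
    have hle := setIntegral_mono_on hd_int hR measurableSet_Ioo ?_
    · calc (∫ x in Ioo (0:ℝ) π, |Real.sin x ^ α - Real.sin x| * Real.cot (x/2))
          ≤ ∫ x in Ioo (0:ℝ) π, 20 * (1-α) * (2 * π * x ^ (-(3:ℝ)/20)) := hle
        _ = 20 * (1-α) * JG := by rw [hJGdef, integral_const_mul]
    · intro x hx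
      obtain ⟨hsp, hsle⟩ := sin_mem' hx
      have hcot := cot_half_pos' hx
      have h := hmono x hx
      rw [abs_of_nonneg (by linarith)]
      calc (Real.sin x ^ α - Real.sin x) * Real.cot (x/2)
          ≤ (20 * (1-α) * Real.sin x ^ ((17:ℝ)/20)) * Real.cot (x/2) :=
            mul_le_mul_of_nonneg_right (diff_bound' hsp hsle hα9.le hα1.le) hcot.le
        _ = 20 * (1-α) * (Real.sin x ^ ((17:ℝ)/20) * Real.cot (x/2)) := by ring
        _ ≤ 20 * (1-α) * (2 * π * x ^ (-(3:ℝ)/20)) :=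
            mul_le_mul_of_nonneg_left (g_bound' hx) (by nlinarith)
  -- convert interval integrals
  have hconv : ∀ g : ℝ → ℝ, (∫ x in (0:ℝ)..π, g x) = ∫ x in Ioo (0:ℝ) π, g x := by
    intro g
    rw [intervalIntegral.integral_of_le hπ.le, integral_Ioc_eq_integral_Ioo]
  refine ⟨hint, ?_, ?_, ?_⟩
  · rw [hconv]
    have h0 : (0:ℝ) < ∫ x in Ioo (0:ℝ) π, Real.sin x ^ α * Real.cot (x/2) :=
      lt_of_lt_of_le hπ hJ
    exact mul_pos (by positivity) h0
  · rw [hconv]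
    calc (1/π) * (∫ x in Ioo (0:ℝ) π, |Real.sin x ^ α - Real.sin x| * Real.cot (x/2))
        ≤ (1/π) * (20 * (1-α) * JG) := by
          apply mul_le_mul_of_nonneg_left hd_le (by positivity)
      _ = (20/π * JG) * (1-α) := by field_simp
      _ ≤ (20/π * JG + 1) * (1-α) := by nlinarith
  · rw [hconv]
    set J := ∫ x in Ioo (0:ℝ) π, Real.sin x ^ α * Real.cot (x/2) with hJdef
    set I := (1/π) * J with hIdef
    have hI1 : 1 ≤ I := by
      rw [hIdef]
      have hm := mul_le_mul_of_nonneg_left hJ (by positivity : (0:ℝ) ≤ 1/π)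
      calc (1:ℝ) = 1/π * π := by field_simp
        _ ≤ 1/π * J := hm
    have hI0 : 0 < I := by linarith
    have hImul : I * I⁻¹ = 1 := mul_inv_cancel₀ (by linarith)
    have hIle : I - 1 ≤ (20/π * JG + 1) * (1-α) := by
      have : I - 1 = (1/π) * ((∫ x in Ioo (0:ℝ) π,
          |Real.sin x ^ α - Real.sin x| * Real.cot (x/2))) := by
        rw [hd_eq, hIdef]; field_simp
      rw [this]
      calc (1/π) * (∫ x in Ioo (0:ℝ) π, |Real.sin x ^ α - Real.sin x| * Real.cot (x/2))
          ≤ (1/π) * (20 * (1-α) * JG) := mul_le_mul_of_nonneg_left hd_le (by positivity)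
        _ = (20/π * JG) * (1-α) := by field_simp
        _ ≤ (20/π * JG + 1) * (1-α) := by nlinarith
    have hinv1 : I⁻¹ ≤ 1 := by
      rw [← hImul]
      nlinarith [inv_pos.mpr hI0]
    rw [abs_of_nonpos (by linarith)]
    have : 1 - I⁻¹ ≤ I - 1 := by nlinarith [inv_pos.mpr hI0]
    linarith
end

section
/- There exists an absolute constant C > 0 such that for every α ∈ (9/10, 1), every i ∈ {1, 2, 3}, and every x ∈ (0, π): | d^i/dx^i ( sin(x) − c_α (sin x)^α ) | ≤ C (1−α) (sin x)^{7/8 − i}. -/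
open Real Set MeasureTheory intervalIntegral

lemma key_rpow {u α : ℝ} (hu0 : 0 < u) (hu1 : u ≤ 1) (h9 : 9/10 ≤ α) (h1 : α ≤ 1) :
    u ^ (α - 1) ≤ 1 + 40 * (1 - α) * u ^ (-(1/8) : ℝ) := by
  obtain ⟨L, hLdef⟩ : ∃ L : ℝ, L = -Real.log u := ⟨_, rfl⟩
  have hL : 0 ≤ L := by
    rw [hLdef]
    simp only [neg_nonneg]
    exact Real.log_nonpos hu0.le hu1
  have hpow : u ^ (α - 1) = Real.exp ((1 - α) * L) := by
    rw [Real.rpow_def_of_pos hu0, hLdef]; ring_nf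
  have hpow8 : u ^ (-(1/8) : ℝ) = Real.exp (L / 8) := by
    rw [Real.rpow_def_of_pos hu0, hLdef]; ring_nf
  rw [hpow, hpow8]
  obtain ⟨D, hDdef⟩ : ∃ D : ℝ, D = 1 - α := ⟨_, rfl⟩
  rw [show (1:ℝ) - α = D from hDdef.symm] at hpow ⊢
  have hD0 : 0 ≤ D := by simp [hDdef]; linarith
  have hD1 : D ≤ 1/10 := by simp [hDdef]; linarith
  have h1' : Real.exp (D * L) - 1 ≤ D * L * Real.exp (D * L) := by
    have h := mul_le_mul_of_nonneg_right (Real.add_one_le_exp (-(D * L))) (Real.exp_pos (D * L)).le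
    rw [← Real.exp_add] at h
    simp only [neg_add_cancel, Real.exp_zero] at h
    nlinarith
  have h2' : Real.exp (D * L) ≤ Real.exp (L / 10) :=
    Real.exp_le_exp.2 (by nlinarith)
  have h3' : L ≤ 40 * Real.exp (L / 40) := by
    have := Real.add_one_le_exp (L / 40)
    linarith
  have h4' : Real.exp (L / 40) * Real.exp (L / 10) = Real.exp (L / 8) := by
    rw [← Real.exp_add]; ring_nf
  have step : D * L * Real.exp (D * L) ≤ 40 * D * Real.exp (L / 8) := by
    calc D * L * Real.exp (D * L) ≤ D * L * Real.exp (L / 10) := by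
          apply mul_le_mul_of_nonneg_left h2' (mul_nonneg hD0 hL)
      _ ≤ D * (40 * Real.exp (L / 40)) * Real.exp (L / 10) := by
          apply mul_le_mul_of_nonneg_right _ (Real.exp_pos _).le
          exact mul_le_mul_of_nonneg_left h3' hD0
      _ = 40 * D * (Real.exp (L / 40) * Real.exp (L / 10)) := by ring
      _ = 40 * D * Real.exp (L / 8) := by rw [h4']
  linarith

lemma one_le_key {u α : ℝ} (hu0 : 0 < u) (hu1 : u ≤ 1) (h1 : α ≤ 1) :
    1 ≤ u ^ (α - 1) :=
  Real.one_le_rpow_of_pos_of_le_one_of_nonpos hu0 hu1 (by linarith)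

lemma sin_lower {x : ℝ} (hx : 0 ≤ x) (hx' : x ≤ π) : Real.sin x ≤ 1 := Real.sin_le_one x

lemma integrable_sin_neg8 :
    IntervalIntegrable (fun x => Real.sin x ^ (-(1/8) : ℝ)) volume 0 π := by
  have half : IntervalIntegrable (fun x => Real.sin x ^ (-(1/8) : ℝ)) volume 0 (π/2) := by
    have hg : IntervalIntegrable (fun x : ℝ => (2/π) ^ (-(1/8) : ℝ) * x ^ (-(1/8) : ℝ))
        volume 0 (π/2) := (intervalIntegral.intervalIntegrable_rpow' (by norm_num)).const_mul _
    apply hg.mono_fun'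
    · apply Measurable.aestronglyMeasurable
      measurability
    · rw [Filter.EventuallyLE, ae_restrict_iff' measurableSet_uIoc]
      apply Filter.Eventually.of_forall
      intro x hx
      rw [Set.uIoc_of_le (by positivity)] at hx
      obtain ⟨hx0, hx1⟩ := hx
      have hsin : 2/π * x ≤ Real.sin x := Real.mul_le_sin hx0.le hx1
      have hsinpos : 0 < Real.sin x := lt_of_lt_of_le (by positivity) hsin
      have h1 : ‖Real.sin x ^ (-(1/8) : ℝ)‖ = Real.sin x ^ (-(1/8) : ℝ) := by
        rw [Real.norm_eq_abs, abs_of_nonneg (Real.rpow_nonneg hsinpos.le _)]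
      rw [h1]
      calc Real.sin x ^ (-(1/8) : ℝ) ≤ (2/π * x) ^ (-(1/8) : ℝ) := by
            apply Real.rpow_le_rpow_of_nonpos (by positivity) hsin (by norm_num)
        _ = (2/π) ^ (-(1/8) : ℝ) * x ^ (-(1/8) : ℝ) := by
            rw [Real.mul_rpow (by positivity) hx0.le]
  have half2 : IntervalIntegrable (fun x => Real.sin x ^ (-(1/8) : ℝ)) volume (π/2) π := by
    have := half.comp_sub_left π
    simp only [sub_zero] at this
    have hfun : (fun x => Real.sin (π - x) ^ (-(1/8) : ℝ))
        = (fun x => Real.sin x ^ (-(1/8) : ℝ)) := by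
      funext x; rw [Real.sin_pi_sub]
    rw [hfun] at this
    have hππ : π - π/2 = π/2 := by ring
    rw [hππ] at this
    exact this.symm
  exact half.trans half2

lemma cot_identity {α : ℝ} (hα0 : 0 < α) (hα1 : α < 1) :
    Set.EqOn (fun s => Real.sin s ^ α * Real.cot (s / 2))
      (fun s => Real.sin s ^ (α - 1) * (1 + Real.cos s)) (Set.Icc 0 π) := by
  intro s hs
  obtain ⟨hs0, hsπ⟩ := hs
  simp only
  rcases eq_or_lt_of_le hs0 with h0 | h0
  · rw [← h0]
    simp [Real.zero_rpow (ne_of_gt hα0), Real.zero_rpow (by intro h; exact absurd h (by linarith) : α - 1 ≠ 0)]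
  rcases eq_or_lt_of_le hsπ with hπ | hπ
  · rw [hπ]
    simp [Real.sin_pi, Real.zero_rpow (ne_of_gt hα0),
      Real.zero_rpow (show α - 1 ≠ 0 by intro h; nlinarith), Real.cos_pi]
  -- now 0 < s < π
  have hhalf0 : 0 < s / 2 := by linarith
  have hhalfπ : s / 2 < π / 2 := by linarith
  have hsinh : 0 < Real.sin (s / 2) :=
    Real.sin_pos_of_pos_of_lt_pi hhalf0 (by linarith [Real.pi_pos])
  have hsins : 0 < Real.sin s := Real.sin_pos_of_pos_of_lt_pi h0 hπ
  have hdouble : Real.sin s = 2 * Real.sin (s/2) * Real.cos (s/2) := by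
    rw [show s = 2 * (s/2) by ring, Real.sin_two_mul]
    ring_nf
  have hcos2 : Real.cos (s/2) ^ 2 = 1/2 + Real.cos s / 2 := by
    have := Real.cos_sq (s/2)
    rw [show 2 * (s/2) = s by ring] at this
    exact this
  have hrpow : Real.sin s ^ α = Real.sin s ^ (α - 1) * Real.sin s := by
    rw [show α = (α - 1) + 1 by ring, Real.rpow_add_one (ne_of_gt hsins)]
    ring_nf
  have key : Real.sin s * (Real.cos (s/2) / Real.sin (s/2)) = 1 + Real.cos s := by
    rw [hdouble]
    field_simp
    nlinarith [hcos2]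
  rw [Real.cot_eq_cos_div_sin, hrpow, mul_assoc, key]

lemma M_nonneg : 0 ≤ ∫ s in (0:ℝ)..π, Real.sin s ^ (-(1/8) : ℝ) := by
  apply intervalIntegral.integral_nonneg Real.pi_pos.le
  intro u hu
  exact Real.rpow_nonneg (Real.sin_nonneg_of_nonneg_of_le_pi hu.1 hu.2) _

lemma f1_integrable {α : ℝ} (hα : 9/10 < α) (hα1 : α < 1) :
    IntervalIntegrable (fun s => Real.sin s ^ (α - 1) * (1 + Real.cos s)) volume 0 π := by
  have hg : IntervalIntegrable
      (fun s : ℝ => 2 + 80 * (1 - α) * Real.sin s ^ (-(1/8) : ℝ)) volume 0 π :=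
    (_root_.intervalIntegrable_const).add (integrable_sin_neg8.const_mul _)
  apply hg.mono_fun'
  · apply Measurable.aestronglyMeasurable; measurability
  · rw [Filter.EventuallyLE, ae_restrict_iff' measurableSet_uIoc]
    apply Filter.Eventually.of_forall
    intro x hx
    rw [Set.uIoc_of_le Real.pi_pos.le] at hx
    obtain ⟨hx0, hx1⟩ := hx
    have hsin0 : 0 ≤ Real.sin x := Real.sin_nonneg_of_nonneg_of_le_pi hx0.le hx1
    have hcos : -1 ≤ Real.cos x := Real.neg_one_le_cos x
    have hE : 0 ≤ Real.sin x ^ (-(1/8) : ℝ) := Real.rpow_nonneg hsin0 _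
    have hD : 0 ≤ 1 - α := by linarith
    have hnorm : ‖Real.sin x ^ (α-1) * (1 + Real.cos x)‖
        = Real.sin x ^ (α-1) * (1 + Real.cos x) := by
      rw [Real.norm_eq_abs, abs_of_nonneg]
      exact mul_nonneg (Real.rpow_nonneg hsin0 _) (by linarith)
    rw [hnorm]
    have hcos1 : Real.cos x ≤ 1 := Real.cos_le_one x
    rcases eq_or_lt_of_le hsin0 with h0 | h0
    · rw [← h0, Real.zero_rpow (show α - 1 ≠ 0 by intro h; nlinarith),
        Real.zero_rpow (show (-(1/8):ℝ) ≠ 0 by norm_num)]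
      nlinarith
    · have hP := key_rpow h0 (Real.sin_le_one x) hα.le hα1.le
      nlinarith [mul_nonneg (mul_nonneg hD hE) (by linarith : (0:ℝ) ≤ 1 - Real.cos x),
        mul_nonneg (by linarith : (0:ℝ) ≤ 1 + 40*(1-α)*Real.sin x ^ (-(1/8):ℝ) - Real.sin x ^ (α-1))
          (by linarith : (0:ℝ) ≤ 1 + Real.cos x)]

lemma base_integrable : IntervalIntegrable (fun s : ℝ => 1 + Real.cos s) volume 0 π :=
  (_root_.intervalIntegrable_const).add intervalIntegrable_cos

lemma base_integral : (∫ s in (0:ℝ)..π, (1 + Real.cos s)) = π := by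
  rw [intervalIntegral.integral_add _root_.intervalIntegrable_const intervalIntegrable_cos,
    integral_cos]
  simp

lemma I_bounds {α : ℝ} (hα : 9/10 < α) (hα1 : α < 1) :
    π ≤ (∫ s in (0:ℝ)..π, Real.sin s ^ α * Real.cot (s/2)) ∧
    (∫ s in (0:ℝ)..π, Real.sin s ^ α * Real.cot (s/2))
      ≤ π + 80 * (1-α) * (∫ s in (0:ℝ)..π, Real.sin s ^ (-(1/8) : ℝ)) := by
  have hcongr : (∫ s in (0:ℝ)..π, Real.sin s ^ α * Real.cot (s/2))
      = ∫ s in (0:ℝ)..π, Real.sin s ^ (α - 1) * (1 + Real.cos s) := by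
    apply intervalIntegral.integral_congr
    rw [Set.uIcc_of_le Real.pi_pos.le]
    exact cot_identity (by linarith) hα1
  rw [hcongr]
  have hf1 := f1_integrable hα hα1
  constructor
  · have hstep : (∫ s in (0:ℝ)..π, (1 + Real.cos s))
        ≤ ∫ s in (0:ℝ)..π, Real.sin s ^ (α - 1) * (1 + Real.cos s) := by
      apply intervalIntegral.integral_mono_ae_restrict Real.pi_pos.le base_integrable hf1
      have hae : ∀ᵐ x ∂(volume.restrict (Icc (0:ℝ) π)), x ∈ Ioo (0:ℝ) π := by
        have h1 : ∀ᵐ x ∂(volume.restrict (Icc (0:ℝ) π)), x ∈ Icc (0:ℝ) π :=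
          ae_restrict_mem measurableSet_Icc
        filter_upwards [h1, MeasureTheory.ae_restrict_of_ae
          (MeasureTheory.Ioo_ae_eq_Icc (μ := volume) (a := (0:ℝ)) (b := π))] with x hx hx2
        rw [show (x ∈ Ioo (0:ℝ) π) = (x ∈ Icc (0:ℝ) π) from hx2]
        exact hx
      filter_upwards [hae] with x hx
      obtain ⟨hx0, hx1⟩ := hx
      have hsin : 0 < Real.sin x := Real.sin_pos_of_pos_of_lt_pi hx0 hx1
      have hcos : -1 ≤ Real.cos x := Real.neg_one_le_cos x
      have hP := one_le_key hsin (Real.sin_le_one x) hα1.le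
      nlinarith
    calc π = ∫ s in (0:ℝ)..π, (1 + Real.cos s) := base_integral.symm
      _ ≤ _ := hstep
  · have hg : IntervalIntegrable
        (fun s : ℝ => (1 + Real.cos s) + 80 * (1 - α) * Real.sin s ^ (-(1/8) : ℝ))
        volume 0 π := base_integrable.add (integrable_sin_neg8.const_mul _)
    have hmono := intervalIntegral.integral_mono_on Real.pi_pos.le hf1 hg ?_
    · calc (∫ s in (0:ℝ)..π, Real.sin s ^ (α - 1) * (1 + Real.cos s))
          ≤ ∫ s in (0:ℝ)..π, ((1 + Real.cos s) + 80 * (1-α) * Real.sin s ^ (-(1/8) : ℝ)) :=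
            hmono
        _ = π + 80 * (1-α) * (∫ s in (0:ℝ)..π, Real.sin s ^ (-(1/8) : ℝ)) := by
            rw [intervalIntegral.integral_add base_integrable
              (integrable_sin_neg8.const_mul _), base_integral,
              intervalIntegral.integral_const_mul]
    · intro x hx
      obtain ⟨hx0, hx1⟩ := hx
      have hsin0 : 0 ≤ Real.sin x := Real.sin_nonneg_of_nonneg_of_le_pi hx0 hx1
      have hcos : -1 ≤ Real.cos x := Real.neg_one_le_cos x
      have hcos1 : Real.cos x ≤ 1 := Real.cos_le_one x
      have hE : 0 ≤ Real.sin x ^ (-(1/8) : ℝ) := Real.rpow_nonneg hsin0 _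
      have hD : 0 ≤ 1 - α := by linarith
      rcases eq_or_lt_of_le hsin0 with h0 | h0
      · rw [← h0, Real.zero_rpow (show α - 1 ≠ 0 by intro h; nlinarith),
          Real.zero_rpow (show (-(1/8):ℝ) ≠ 0 by norm_num)]
        nlinarith
      · have hP := key_rpow h0 (Real.sin_le_one x) hα.le hα1.le
        nlinarith [mul_nonneg (mul_nonneg hD hE) (by linarith : (0:ℝ) ≤ 1 - Real.cos x),
          mul_nonneg (by linarith : (0:ℝ) ≤ 1 + 40*(1-α)*Real.sin x ^ (-(1/8):ℝ) - Real.sin x ^ (α-1))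
            (by linarith : (0:ℝ) ≤ 1 + Real.cos x)]

lemma hasDeriv1 (K α : ℝ) {x : ℝ} (hx : 0 < Real.sin x) :
    HasDerivAt (fun t => Real.sin t - K * Real.sin t ^ α)
      (Real.cos x * (1 - K * α * Real.sin x ^ (α - 1))) x := by
  have h1 : HasDerivAt (fun t => Real.sin t ^ α)
      (Real.cos x * α * Real.sin x ^ (α - 1)) x :=
    (Real.hasDerivAt_sin x).rpow_const (Or.inl hx.ne')
  have h2 := (Real.hasDerivAt_sin x).sub (h1.const_mul K)
  refine h2.congr_deriv ?_
  ring

lemma hasDeriv2 (K α : ℝ) {x : ℝ} (hx : 0 < Real.sin x) :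
    HasDerivAt (fun t => Real.cos t * (1 - K * α * Real.sin t ^ (α - 1)))
      (-(Real.sin x * (1 - K * α * Real.sin x ^ (α - 1)))
        - K * (α * (α - 1)) * (Real.sin x ^ (α - 2) * Real.cos x ^ 2)) x := by
  have hp : HasDerivAt (fun t => Real.sin t ^ (α - 1))
      (Real.cos x * (α - 1) * Real.sin x ^ (α - 1 - 1)) x :=
    (Real.hasDerivAt_sin x).rpow_const (Or.inl hx.ne')
  rw [show α - 1 - 1 = α - 2 by ring] at hp
  have hq := (hp.const_mul (K * α)).const_sub 1
  have hA := (Real.hasDerivAt_cos x).mul hq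
  refine hA.congr_deriv ?_
  ring

lemma hasDeriv3 (K α : ℝ) {x : ℝ} (hx : 0 < Real.sin x) :
    HasDerivAt (fun t => -(Real.sin t * (1 - K * α * Real.sin t ^ (α - 1)))
        - K * (α * (α - 1)) * (Real.sin t ^ (α - 2) * Real.cos t ^ 2))
      (-(Real.cos x * (1 - K * (3 * α ^ 2 - 2 * α) * Real.sin x ^ (α - 1)))
        - K * (α * ((α - 1) * (α - 2))) * (Real.sin x ^ (α - 3) * Real.cos x ^ 3)) x := by
  have hp : HasDerivAt (fun t => Real.sin t ^ (α - 1))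
      (Real.cos x * (α - 1) * Real.sin x ^ (α - 1 - 1)) x :=
    (Real.hasDerivAt_sin x).rpow_const (Or.inl hx.ne')
  rw [show α - 1 - 1 = α - 2 by ring] at hp
  have hq := (hp.const_mul (K * α)).const_sub 1
  have hA := ((Real.hasDerivAt_sin x).mul hq).neg
  have hr : HasDerivAt (fun t => Real.sin t ^ (α - 2))
      (Real.cos x * (α - 2) * Real.sin x ^ (α - 2 - 1)) x :=
    (Real.hasDerivAt_sin x).rpow_const (Or.inl hx.ne')
  rw [show α - 2 - 1 = α - 3 by ring] at hr
  have hs : HasDerivAt (fun t => Real.cos t ^ 2)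
      (2 * Real.cos x ^ 1 * -Real.sin x) x := by
    have := (Real.hasDerivAt_cos x).pow 2
    norm_num at this ⊢
    exact this
  have hB := (hr.mul hs).const_mul (K * (α * (α - 1)))
  have htot := hA.sub hB
  have hQs : Real.sin x ^ (α - 2) * Real.sin x = Real.sin x ^ (α - 1) := by
    have h := (Real.rpow_add_one hx.ne' (α - 2)).symm
    rw [show α - 2 + 1 = α - 1 by ring] at h
    exact h
  refine htot.congr_deriv ?_
  linear_combination (3 * K * α * (α - 1) * Real.cos x) * hQs

lemma central_bound {c0 K α u : ℝ} (hu0 : 0 < u) (hu1 : u ≤ 1)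
    (hα : 9/10 ≤ α) (hα1 : α ≤ 1) (hc0 : 0 ≤ c0) (hK1 : K ≤ 1)
    (hK0 : 1 - c0 * (1 - α) ≤ K) (hKp : 0 ≤ K)
    {β : ℝ} (hβ0 : 0 ≤ β) (hβ1 : β ≤ 1) (hβd : 1 - β ≤ 4 * (1 - α)) :
    |1 - K * β * u ^ (α - 1)| ≤ (c0 + 45) * (1 - α) * u ^ (-(1/8) : ℝ) := by
  have hP1 := one_le_key hu0 hu1 hα1
  have hP2 := key_rpow hu0 hu1 hα hα1
  have hE1 : 1 ≤ u ^ (-(1/8) : ℝ) :=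
    Real.one_le_rpow_of_pos_of_le_one_of_nonpos hu0 hu1 (by norm_num)
  have hD : 0 ≤ 1 - α := by linarith
  set P := u ^ (α - 1)
  set E := u ^ (-(1/8) : ℝ)
  set D := 1 - α with hDdef
  have hDE : D ≤ D * E := le_mul_of_one_le_right hD hE1
  have f1 : K * β ≤ K * β * P := le_mul_of_one_le_right (mul_nonneg hKp hβ0) hP1
  have f2 : (1 - c0 * D) * β ≤ K * β := mul_le_mul_of_nonneg_right hK0 hβ0
  have f4 : c0 * D * β ≤ c0 * D := mul_le_of_le_one_right (by positivity) hβ1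
  have hKβ1 : K * β ≤ 1 := by
    calc K * β ≤ K * 1 := mul_le_mul_of_nonneg_left hβ1 hKp
      _ ≤ 1 := by linarith
  have hP0 : 0 ≤ P := by linarith
  have hKP : K * β * P ≤ P := by
    calc K * β * P ≤ 1 * P := mul_le_mul_of_nonneg_right hKβ1 hP0
      _ = P := one_mul P
  have hDE' : (c0 + 45) * D ≤ (c0 + 45) * (D * E) :=
    mul_le_mul_of_nonneg_left hDE (by linarith)
  have hDE40 : 40 * (D * E) ≤ 45 * (D * E) := by nlinarith [mul_nonneg hD (by linarith : (0:ℝ) ≤ E)]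
  have hDE0 : 0 ≤ D * E := mul_nonneg hD (by linarith)
  rw [abs_le]
  constructor
  · -- lower bound
    nlinarith [mul_nonneg hc0 hDE0]
  · -- upper bound
    nlinarith [mul_nonneg hc0 hDE0]

lemma bound_one {c0 K α u c : ℝ} (hu0 : 0 < u) (hu1 : u ≤ 1)
    (hα : 9/10 ≤ α) (hα1 : α ≤ 1) (hc0 : 0 ≤ c0) (hK1 : K ≤ 1)
    (hK0 : 1 - c0 * (1 - α) ≤ K) (hKp : 0 ≤ K) (hc : |c| ≤ 1) :
    |c * (1 - K * α * u ^ (α - 1))| ≤ (c0 + 50) * (1 - α) * u ^ (-(1/8) : ℝ) := by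
  have hcen := central_bound hu0 hu1 hα hα1 hc0 hK1 hK0 hKp
    (show (0:ℝ) ≤ α by linarith) hα1 (by linarith)
  have hE0 : 0 ≤ u ^ (-(1/8) : ℝ) := Real.rpow_nonneg hu0.le _
  have hD : 0 ≤ 1 - α := by linarith
  rw [abs_mul]
  calc |c| * |1 - K * α * u ^ (α - 1)|
      ≤ 1 * ((c0 + 45) * (1 - α) * u ^ (-(1/8) : ℝ)) :=
        mul_le_mul hc hcen (abs_nonneg _) zero_le_one
    _ ≤ (c0 + 50) * (1 - α) * u ^ (-(1/8) : ℝ) := by nlinarith [mul_nonneg hD hE0]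

lemma bound_two {c0 K α u c : ℝ} (hu0 : 0 < u) (hu1 : u ≤ 1)
    (hα : 9/10 ≤ α) (hα1 : α ≤ 1) (hc0 : 0 ≤ c0) (hK1 : K ≤ 1)
    (hK0 : 1 - c0 * (1 - α) ≤ K) (hKp : 0 ≤ K) (hc : |c| ≤ 1) :
    |-(u * (1 - K * α * u ^ (α - 1))) - K * (α * (α - 1)) * (u ^ (α - 2) * c ^ 2)|
      ≤ (c0 + 50) * (1 - α) * u ^ (-(9/8) : ℝ) := by
  have hcen := central_bound hu0 hu1 hα hα1 hc0 hK1 hK0 hKp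
    (show (0:ℝ) ≤ α by linarith) hα1 (by linarith)
  have hE0 : 0 ≤ u ^ (-(1/8) : ℝ) := Real.rpow_nonneg hu0.le _
  have hE9 : u ^ (-(1/8) : ℝ) ≤ u ^ (-(9/8) : ℝ) :=
    Real.rpow_le_rpow_of_exponent_ge hu0 hu1 (by norm_num)
  have hQ9 : u ^ (α - 2) ≤ u ^ (-(9/8) : ℝ) :=
    Real.rpow_le_rpow_of_exponent_ge hu0 hu1 (by linarith)
  have hQ0 : 0 ≤ u ^ (α - 2) := Real.rpow_nonneg hu0.le _
  have hD : 0 ≤ 1 - α := by linarith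
  have hc2 : c ^ 2 ≤ 1 := by nlinarith [abs_nonneg c, sq_abs c]
  have hc20 : 0 ≤ c ^ 2 := sq_nonneg c
  have ht1 : |-(u * (1 - K * α * u ^ (α - 1)))| ≤ (c0 + 45) * (1 - α) * u ^ (-(1/8) : ℝ) := by
    rw [abs_neg, abs_mul, abs_of_nonneg hu0.le]
    calc u * |1 - K * α * u ^ (α - 1)| ≤ 1 * |1 - K * α * u ^ (α - 1)| :=
          mul_le_mul_of_nonneg_right hu1 (abs_nonneg _)
      _ = |1 - K * α * u ^ (α - 1)| := one_mul _
      _ ≤ _ := hcen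
  have ht2 : |K * (α * (α - 1)) * (u ^ (α - 2) * c ^ 2)| ≤ (1 - α) * u ^ (-(9/8) : ℝ) := by
    rw [abs_mul]
    have h1 : |K * (α * (α - 1))| ≤ 1 - α := by
      rw [abs_mul, abs_mul, abs_of_nonneg hKp, abs_of_nonneg (by linarith : (0:ℝ) ≤ α),
        abs_of_nonpos (by linarith : α - 1 ≤ 0)]
      nlinarith [mul_le_mul_of_nonneg_right hK1 (mul_nonneg (by linarith : (0:ℝ) ≤ α) hD),
        mul_le_mul_of_nonneg_right hα1 hD]
    have h2 : |u ^ (α - 2) * c ^ 2| ≤ u ^ (-(9/8) : ℝ) := by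
      rw [abs_mul, abs_of_nonneg hQ0, abs_of_nonneg hc20]
      calc u ^ (α - 2) * c ^ 2 ≤ u ^ (α - 2) * 1 := mul_le_mul_of_nonneg_left hc2 hQ0
        _ = u ^ (α - 2) := mul_one _
        _ ≤ _ := hQ9
    exact mul_le_mul h1 h2 (abs_nonneg _) hD
  have habs : |(-(u * (1 - K * α * u ^ (α - 1)))) - K * (α * (α - 1)) * (u ^ (α - 2) * c ^ 2)|
      ≤ |-(u * (1 - K * α * u ^ (α - 1)))| + |K * (α * (α - 1)) * (u ^ (α - 2) * c ^ 2)| :=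
    abs_sub _ _
  have hE90 : 0 ≤ u ^ (-(9/8) : ℝ) := Real.rpow_nonneg hu0.le _
  have hmid : (c0 + 45) * (1 - α) * u ^ (-(1/8) : ℝ) ≤ (c0 + 45) * (1 - α) * u ^ (-(9/8) : ℝ) :=
    mul_le_mul_of_nonneg_left hE9 (by positivity)
  nlinarith [mul_nonneg hD hE90, mul_nonneg hc0 (mul_nonneg hD hE90)]

lemma bound_three {c0 K α u c : ℝ} (hu0 : 0 < u) (hu1 : u ≤ 1)
    (hα : 9/10 ≤ α) (hα1 : α ≤ 1) (hc0 : 0 ≤ c0) (hK1 : K ≤ 1)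
    (hK0 : 1 - c0 * (1 - α) ≤ K) (hKp : 0 ≤ K) (hc : |c| ≤ 1) :
    |(-(c * (1 - K * (3 * α ^ 2 - 2 * α) * u ^ (α - 1))))
        - K * (α * ((α - 1) * (α - 2))) * (u ^ (α - 3) * c ^ 3)|
      ≤ (c0 + 50) * (1 - α) * u ^ (-(17/8) : ℝ) := by
  have hcen := central_bound hu0 hu1 hα hα1 hc0 hK1 hK0 hKp
    (show (0:ℝ) ≤ 3 * α ^ 2 - 2 * α by nlinarith) (by nlinarith) (by nlinarith)
  have hE0 : 0 ≤ u ^ (-(1/8) : ℝ) := Real.rpow_nonneg hu0.le _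
  have hE17 : u ^ (-(1/8) : ℝ) ≤ u ^ (-(17/8) : ℝ) :=
    Real.rpow_le_rpow_of_exponent_ge hu0 hu1 (by norm_num)
  have hR17 : u ^ (α - 3) ≤ u ^ (-(17/8) : ℝ) :=
    Real.rpow_le_rpow_of_exponent_ge hu0 hu1 (by linarith)
  have hR0 : 0 ≤ u ^ (α - 3) := Real.rpow_nonneg hu0.le _
  have hD : 0 ≤ 1 - α := by linarith
  have ht1 : |(-(c * (1 - K * (3 * α ^ 2 - 2 * α) * u ^ (α - 1))))|
      ≤ (c0 + 45) * (1 - α) * u ^ (-(1/8) : ℝ) := by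
    rw [abs_neg, abs_mul]
    calc |c| * |1 - K * (3 * α ^ 2 - 2 * α) * u ^ (α - 1)|
        ≤ 1 * ((c0 + 45) * (1 - α) * u ^ (-(1/8) : ℝ)) :=
          mul_le_mul hc hcen (abs_nonneg _) zero_le_one
      _ = _ := one_mul _
  have ht2 : |K * (α * ((α - 1) * (α - 2))) * (u ^ (α - 3) * c ^ 3)|
      ≤ 2 * (1 - α) * u ^ (-(17/8) : ℝ) := by
    rw [abs_mul]
    have h1 : |K * (α * ((α - 1) * (α - 2)))| ≤ 2 * (1 - α) := by
      rw [abs_mul, abs_mul, abs_mul, abs_of_nonneg hKp,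
        abs_of_nonneg (by linarith : (0:ℝ) ≤ α),
        abs_of_nonpos (by linarith : α - 1 ≤ 0), abs_of_nonpos (by linarith : α - 2 ≤ 0)]
      nlinarith [mul_le_mul_of_nonneg_right hK1
          (mul_nonneg (by linarith : (0:ℝ) ≤ α) (mul_nonneg hD (by linarith : (0:ℝ) ≤ 2 - α))),
        mul_nonneg hD (show (0:ℝ) ≤ 2 - α * (2-α) by nlinarith [sq_nonneg (α-1)])]
    have hc3 : |c ^ 3| ≤ 1 := by
      rw [abs_pow]
      calc |c| ^ 3 ≤ 1 ^ 3 := pow_le_pow_left₀ (abs_nonneg c) hc 3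
        _ = 1 := one_pow 3
    have h2 : |u ^ (α - 3) * c ^ 3| ≤ u ^ (-(17/8) : ℝ) := by
      rw [abs_mul, abs_of_nonneg hR0]
      calc u ^ (α - 3) * |c ^ 3| ≤ u ^ (α - 3) * 1 := mul_le_mul_of_nonneg_left hc3 hR0
        _ = u ^ (α - 3) := mul_one _
        _ ≤ _ := hR17
    exact mul_le_mul h1 h2 (abs_nonneg _) (by linarith)
  have habs := abs_sub (-(c * (1 - K * (3 * α ^ 2 - 2 * α) * u ^ (α - 1))))
    (K * (α * ((α - 1) * (α - 2))) * (u ^ (α - 3) * c ^ 3))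
  have hE170 : 0 ≤ u ^ (-(17/8) : ℝ) := Real.rpow_nonneg hu0.le _
  have hmid : (c0 + 45) * (1 - α) * u ^ (-(1/8) : ℝ) ≤ (c0 + 45) * (1 - α) * u ^ (-(17/8) : ℝ) :=
    mul_le_mul_of_nonneg_left hE17 (by positivity)
  nlinarith [mul_nonneg hD hE170, mul_nonneg hc0 (mul_nonneg hD hE170)]


/-- Estimate (6.8) of Lemma 6.1 (with `κ₂ = 7/8`): for `α ∈ (9/10, 1)`,
`i ∈ {1,2,3}`, `x ∈ (0, π)`,
`|∂_x^i η_α(x)| ≤ C (1-α)(sin x)^{7/8 - i}`, where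
`η_α(x) = sin x - c_α (sin x)^α` and
`c_α = ((1/π)∫_0^π (sin x)^α cot(x/2) dx)⁻¹`. -/
theorem eta_alpha_derivative_bounds :
    ∃ C : ℝ, 0 < C ∧
      ∀ α : ℝ, 9 / 10 < α → α < 1 →
        ∀ i : ℕ, (i = 1 ∨ i = 2 ∨ i = 3) →
          ∀ x ∈ Ioo (0 : ℝ) π,
            |iteratedDeriv i
                (fun t => Real.sin t
                  - ((1 / π) * ∫ s in (0:ℝ)..π, Real.sin s ^ α * Real.cot (s / 2))⁻¹
                    * Real.sin t ^ α) x|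
              ≤ C * (1 - α) * Real.sin x ^ ((7 : ℝ) / 8 - i) := by
  refine ⟨80 * (∫ s in (0:ℝ)..π, Real.sin s ^ (-(1/8) : ℝ)) / π + 50, ?_, ?_⟩
  · have h := div_nonneg
      (by linarith [M_nonneg] : (0:ℝ) ≤ 80 * (∫ s in (0:ℝ)..π, Real.sin s ^ (-(1/8) : ℝ)))
      Real.pi_pos.le
    linarith
  obtain ⟨M, hMdef⟩ : ∃ m : ℝ, m = ∫ s in (0:ℝ)..π, Real.sin s ^ (-(1/8) : ℝ) := ⟨_, rfl⟩
  rw [← hMdef]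
  have hM0 : 0 ≤ M := hMdef ▸ M_nonneg
  intro α hα hα1 i hi x hx
  obtain ⟨hx0, hxπ⟩ := hx
  have hc0 : 0 ≤ 80 * M / π := div_nonneg (by linarith) Real.pi_pos.le
  obtain ⟨hIlow, hIhigh⟩ := I_bounds hα hα1
  rw [← hMdef] at hIhigh
  obtain ⟨J, hJdef⟩ : ∃ j : ℝ,
      j = (1 / π) * ∫ s in (0:ℝ)..π, Real.sin s ^ α * Real.cot (s / 2) := ⟨_, rfl⟩
  rw [← hJdef]
  have hπ : (0:ℝ) < π := Real.pi_pos
  have hJ1 : 1 ≤ J := by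
    rw [hJdef]
    calc (1:ℝ) = (1/π) * π := by field_simp
      _ ≤ (1/π) * ∫ s in (0:ℝ)..π, Real.sin s ^ α * Real.cot (s / 2) :=
          mul_le_mul_of_nonneg_left hIlow (by positivity)
  have hJ2 : J ≤ 1 + (80 * M / π) * (1 - α) := by
    rw [hJdef]
    calc (1/π) * ∫ s in (0:ℝ)..π, Real.sin s ^ α * Real.cot (s / 2)
        ≤ (1/π) * (π + 80 * (1-α) * M) := mul_le_mul_of_nonneg_left hIhigh (by positivity)
      _ = 1 + (80 * M / π) * (1 - α) := by field_simp
  have hJpos : 0 < J := lt_of_lt_of_le one_pos hJ1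
  have hKp : (0:ℝ) ≤ J⁻¹ := inv_nonneg.2 hJpos.le
  have hKJ : J⁻¹ * J = 1 := inv_mul_cancel₀ hJpos.ne'
  have hK1 : J⁻¹ ≤ 1 := by nlinarith [mul_nonneg hKp (sub_nonneg.2 hJ1)]
  have hK0 : 1 - (80 * M / π) * (1 - α) ≤ J⁻¹ := by
    nlinarith [mul_le_mul_of_nonneg_left hJ2 hKp,
      mul_le_mul_of_nonneg_right hK1 (mul_nonneg hc0 (by linarith : (0:ℝ) ≤ 1 - α))]
  have hsin : 0 < Real.sin x := Real.sin_pos_of_pos_of_lt_pi hx0 hxπ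
  have hsin1 : Real.sin x ≤ 1 := Real.sin_le_one x
  have hcos : |Real.cos x| ≤ 1 := Real.abs_cos_le_one x
  have hev1 : ∀ y ∈ Ioo (0:ℝ) π,
      deriv (fun t => Real.sin t - J⁻¹ * Real.sin t ^ α) y
        = Real.cos y * (1 - J⁻¹ * α * Real.sin y ^ (α - 1)) := fun y hy =>
    (hasDeriv1 J⁻¹ α (Real.sin_pos_of_pos_of_lt_pi hy.1 hy.2)).deriv
  have hev2 : ∀ y ∈ Ioo (0:ℝ) π,
      deriv (deriv (fun t => Real.sin t - J⁻¹ * Real.sin t ^ α)) y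
        = -(Real.sin y * (1 - J⁻¹ * α * Real.sin y ^ (α - 1)))
            - J⁻¹ * (α * (α - 1)) * (Real.sin y ^ (α - 2) * Real.cos y ^ 2) := by
    intro y hy
    have hsy := Real.sin_pos_of_pos_of_lt_pi hy.1 hy.2
    have heq : deriv (fun t => Real.sin t - J⁻¹ * Real.sin t ^ α)
        =ᶠ[nhds y] (fun t => Real.cos t * (1 - J⁻¹ * α * Real.sin t ^ (α - 1))) := by
      filter_upwards [isOpen_Ioo.mem_nhds hy] with z hz
      exact hev1 z hz
    rw [heq.deriv_eq, (hasDeriv2 J⁻¹ α hsy).deriv]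
  rcases hi with rfl | rfl | rfl
  · rw [iteratedDeriv_one, hev1 x ⟨hx0, hxπ⟩]
    have hexp : Real.sin x ^ ((7:ℝ)/8 - ((1:ℕ):ℝ)) = Real.sin x ^ (-(1/8) : ℝ) := by
      norm_num
    rw [hexp]
    exact bound_one hsin hsin1 hα.le hα1.le hc0 hK1 hK0 hKp hcos
  · rw [iteratedDeriv_succ, iteratedDeriv_one, hev2 x ⟨hx0, hxπ⟩]
    have hexp : Real.sin x ^ ((7:ℝ)/8 - ((2:ℕ):ℝ)) = Real.sin x ^ (-(9/8) : ℝ) := by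
      norm_num
    rw [hexp]
    exact bound_two hsin hsin1 hα.le hα1.le hc0 hK1 hK0 hKp hcos
  · rw [iteratedDeriv_succ, iteratedDeriv_succ, iteratedDeriv_one]
    have heq2 : deriv (deriv (fun t => Real.sin t - J⁻¹ * Real.sin t ^ α))
        =ᶠ[nhds x] (fun t => -(Real.sin t * (1 - J⁻¹ * α * Real.sin t ^ (α - 1)))
            - J⁻¹ * (α * (α - 1)) * (Real.sin t ^ (α - 2) * Real.cos t ^ 2)) := by
      filter_upwards [isOpen_Ioo.mem_nhds (⟨hx0, hxπ⟩ : x ∈ Ioo (0:ℝ) π)] with z hz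
      exact hev2 z hz
    rw [heq2.deriv_eq, (hasDeriv3 J⁻¹ α hsin).deriv]
    have hexp : Real.sin x ^ ((7:ℝ)/8 - ((3:ℕ):ℝ)) = Real.sin x ^ (-(17/8) : ℝ) := by
      norm_num
    rw [hexp]
    exact bound_three hsin hsin1 hα.le hα1.le hc0 hK1 hK0 hKp hcos
end

section
/- Let x₀ > 0, M > 0, C₀ > 0, and let W : (0, ∞) → ℝ be three times continuously differentiable with: |W(x)| ≤ C₀ (1 + |log x|) e^{−x/8}, |W'(x)| ≤ C₀ x^{−1} e^{−x/8}, and |W''(x)| ≤ C₀ x^{−2} e^{−x/8} for all x > 0; W''(x) ≥ 0 for all x ∈ (0, x₀]; ∫_{x₀}^∞ |W'''(x)| dx < ∞; and −W'(x₀) − (1/M)( |W''(x₀)| + ∫_{x₀}^∞ |W'''(x)| dx ) ≥ 0. Then for every ξ ≥ M, ∫_0^∞ W(x) cos(xξ) dx ≥ 0. -/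
open MeasureTheory Real Set

open Filter

lemma one_sub_cos_le_half_sq (t : ℝ) : 1 - Real.cos t ≤ t ^ 2 / 2 := by
  have h1 : Real.sin (t/2) ^ 2 ≤ (t/2) ^ 2 := Real.sin_sq_le_sq
  have h2 : Real.sin (t/2) ^ 2 = 1/2 - Real.cos (2 * (t/2)) / 2 := Real.sin_sq_eq_half_sub _
  rw [show 2 * (t/2) = t by ring] at h2
  nlinarith

lemma tendsto_seq_inv_nhdsWithin : Tendsto (fun n : ℕ => ((n : ℝ) + 1)⁻¹) atTop (nhdsWithin 0 (Ioi 0)) := by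
  have h1 : Tendsto (fun n : ℕ => ((n : ℝ) + 1)⁻¹) atTop (nhds 0) := by
    simpa [one_div] using tendsto_one_div_add_atTop_nhds_zero_nat (𝕜 := ℝ)
  exact tendsto_nhdsWithin_of_tendsto_nhds_of_eventually_within _ h1
    (Eventually.of_forall (fun n => by simp only [mem_Ioi]; positivity))

lemma iUnion_Ioi_inv_succ : (⋃ n : ℕ, Ioi (((n : ℝ) + 1)⁻¹)) = Ioi (0:ℝ) := by
  ext x
  simp only [mem_iUnion, mem_Ioi]
  constructor
  · rintro ⟨n, hn⟩; exact lt_trans (by positivity) hn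
  · intro hx
    obtain ⟨n, hn⟩ := exists_nat_gt x⁻¹
    refine ⟨n, ?_⟩
    rw [inv_lt_comm₀ (by positivity) hx]
    linarith

lemma monotone_Ioi_inv_succ : Monotone (fun n : ℕ => Ioi (((n : ℝ) + 1)⁻¹)) := by
  intro n m hnm
  apply Ioi_subset_Ioi
  apply inv_anti₀ (by positivity)
  have : (n : ℝ) ≤ m := Nat.cast_le.2 hnm
  linarith

/-- FTC on `(0, ∞)` with vanishing limits at both (possibly singular) endpoints. -/
lemma ftc_Ioi_sing (f f' : ℝ → ℝ)
    (hd : ∀ x ∈ Ioi (0:ℝ), HasDerivAt f (f' x) x)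
    (hi : IntegrableOn f' (Ioi (0:ℝ)))
    (h0 : Tendsto f (nhdsWithin 0 (Ioi 0)) (nhds 0))
    (htop : Tendsto f atTop (nhds (0:ℝ))) :
    ∫ x in Ioi (0:ℝ), f' x = 0 := by
  set u : ℕ → ℝ := fun n => ((n : ℝ) + 1)⁻¹ with hu
  have hupos : ∀ n, 0 < u n := fun n => by positivity
  have hkey : ∀ n, ∫ x in Ioi (u n), f' x = 0 - f (u n) := fun n =>
    integral_Ioi_of_hasDerivAt_of_tendsto
      ((hd _ (hupos n)).continuousAt.continuousWithinAt)
      (fun x hx => hd x (lt_trans (hupos n) hx))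
      (hi.mono_set (Ioi_subset_Ioi (hupos n).le)) htop
  have h1 : Tendsto (fun n => ∫ x in Ioi (u n), f' x) atTop (nhds (∫ x in Ioi (0:ℝ), f' x)) := by
    have := tendsto_setIntegral_of_monotone (f := f') (μ := volume)
      (fun n : ℕ => measurableSet_Ioi) monotone_Ioi_inv_succ
      (by rw [iUnion_Ioi_inv_succ]; exact hi)
    rwa [iUnion_Ioi_inv_succ] at this
  have h2 : Tendsto (fun n => ∫ x in Ioi (u n), f' x) atTop (nhds 0) := by
    have : Tendsto (fun n => 0 - f (u n)) atTop (nhds (0 - 0)) :=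
      tendsto_const_nhds.sub (h0.comp tendsto_seq_inv_nhdsWithin)
    simpa [hkey] using this
  exact tendsto_nhds_unique h1 h2

/-- FTC on `(0, b]` with vanishing limit at the singular left endpoint. -/
lemma ftc_Ioc_sing (b : ℝ) (hb : 0 < b) (f f' : ℝ → ℝ)
    (hd : ∀ x ∈ Ioi (0:ℝ), HasDerivAt f (f' x) x)
    (hi : IntegrableOn f' (Ioc (0:ℝ) b))
    (h0 : Tendsto f (nhdsWithin 0 (Ioi 0)) (nhds 0)) :
    ∫ x in Ioc (0:ℝ) b, f' x = f b := by
  set u : ℕ → ℝ := fun n => b * ((n : ℝ) + 1)⁻¹ with hu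
  have hupos : ∀ n, 0 < u n := fun n => by positivity
  have huleb : ∀ n, u n ≤ b := by
    intro n
    rw [hu]
    calc b * ((n:ℝ)+1)⁻¹ ≤ b * 1 := by
          apply mul_le_mul_of_nonneg_left _ hb.le
          rw [inv_le_one_iff₀]; right; linarith [Nat.cast_nonneg (α:=ℝ) n]
      _ = b := mul_one b
  have hkey : ∀ n, ∫ x in Ioc (u n) b, f' x = f b - f (u n) := by
    intro n
    have h1 : ∫ x in (u n)..b, f' x = f b - f (u n) := by
      apply intervalIntegral.integral_eq_sub_of_hasDerivAt
      · intro x hx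
        rw [uIcc_of_le (huleb n)] at hx
        exact hd x (lt_of_lt_of_le (hupos n) hx.1)
      · rw [intervalIntegrable_iff_integrableOn_Ioc_of_le (huleb n)]
        exact hi.mono_set (Ioc_subset_Ioc_left (hupos n).le)
    rwa [intervalIntegral.integral_of_le (huleb n)] at h1
  have hmono : Monotone (fun n : ℕ => Ioc (u n) b) := by
    intro n m hnm
    apply Ioc_subset_Ioc_left
    apply mul_le_mul_of_nonneg_left _ hb.le
    apply inv_anti₀ (by positivity)
    have : (n : ℝ) ≤ m := Nat.cast_le.2 hnm
    linarith
  have hunion : (⋃ n : ℕ, Ioc (u n) b) = Ioc (0:ℝ) b := by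
    ext x
    simp only [mem_iUnion, mem_Ioc]
    constructor
    · rintro ⟨n, hn1, hn2⟩; exact ⟨lt_trans (hupos n) hn1, hn2⟩
    · rintro ⟨hx1, hx2⟩
      obtain ⟨n, hn⟩ := exists_nat_gt (b * x⁻¹)
      refine ⟨n, ?_, hx2⟩
      show b * ((n:ℝ)+1)⁻¹ < x
      rw [mul_inv_lt_iff₀ (by positivity)]
      have h2 : b * x⁻¹ * x < (n:ℝ) * x := mul_lt_mul_of_pos_right hn hx1
      rw [mul_assoc, inv_mul_cancel₀ hx1.ne', mul_one] at h2
      nlinarith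
  have h1 : Tendsto (fun n => ∫ x in Ioc (u n) b, f' x) atTop (nhds (∫ x in Ioc (0:ℝ) b, f' x)) := by
    have := tendsto_setIntegral_of_monotone (f := f') (μ := volume)
      (fun n : ℕ => measurableSet_Ioc) hmono (by rw [hunion]; exact hi)
    rwa [hunion] at this
  have h2 : Tendsto (fun n => ∫ x in Ioc (u n) b, f' x) atTop (nhds (f b)) := by
    have hto : Tendsto u atTop (nhdsWithin 0 (Ioi 0)) := by
      apply tendsto_nhdsWithin_of_tendsto_nhds_of_eventually_within
      · have : Tendsto (fun n : ℕ => ((n : ℝ) + 1)⁻¹) atTop (nhds 0) := by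
          simpa [one_div] using tendsto_one_div_add_atTop_nhds_zero_nat (𝕜 := ℝ)
        simpa using this.const_mul b
      · exact Eventually.of_forall (fun n => hupos n)
    have : Tendsto (fun n => f b - f (u n)) atTop (nhds (f b - 0)) :=
      tendsto_const_nhds.sub (h0.comp hto)
    simpa [hkey] using this
  exact tendsto_nhds_unique h1 h2


lemma abs_mul_le_of_le' {a b A B : ℝ} (ha : |a| ≤ A) (hb : |b| ≤ B) (hB : 0 ≤ B) :
    |a * b| ≤ A * B := by
  rw [abs_mul]
  exact mul_le_mul ha hb (abs_nonneg _) ((abs_nonneg a).trans ha)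

lemma integrableOn_exp_neg_div (c a : ℝ) (hc : 0 < c) :
    IntegrableOn (fun x : ℝ => Real.exp (-x / c)) (Ioi a) := by
  have h : (fun x : ℝ => Real.exp (-x / c)) = fun x => Real.exp (-c⁻¹ * x) := by
    funext x; congr 1; field_simp
  rw [h]
  exact exp_neg_integrableOn_Ioi a (by positivity)

lemma tendsto_exp_neg_div_atTop (c : ℝ) (hc : 0 < c) :
    Tendsto (fun x : ℝ => Real.exp (-x / c)) atTop (nhds 0) := by
  have h1 : Tendsto (fun x : ℝ => -x / c) atTop atBot := by
    have := (tendsto_id (α := ℝ) (x := atTop)).atTop_div_const hc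
    have h2 := tendsto_neg_atTop_atBot.comp this
    refine h2.congr (fun x => ?_)
    simp [neg_div]
  exact Real.tendsto_exp_atBot.comp h1

lemma abs_log_le_two_rpow {x : ℝ} (hx0 : 0 < x) (hx1 : x ≤ 1) :
    |Real.log x| ≤ 2 * x ^ (-(1/2) : ℝ) := by
  have h1 : Real.log (x ^ (-(1/2):ℝ)) = (-(1/2)) * Real.log x := Real.log_rpow hx0 _
  have h2 : Real.log (x ^ (-(1/2):ℝ)) ≤ x ^ (-(1/2):ℝ) - 1 :=
    Real.log_le_sub_one_of_pos (Real.rpow_pos_of_pos hx0 _)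
  have h3 : (0:ℝ) < x ^ (-(1/2):ℝ) := Real.rpow_pos_of_pos hx0 _
  rw [abs_of_nonpos (Real.log_nonpos hx0.le hx1)]
  nlinarith

lemma decay_bound_big (C₀ : ℝ) (hC₀ : 0 ≤ C₀) {x : ℝ} (hx : 1 ≤ x) :
    C₀ * (1 + |Real.log x|) * Real.exp (-x/8) ≤ 16 * C₀ * Real.exp (-x/16) := by
  have hx0 : 0 < x := lt_of_lt_of_le zero_lt_one hx
  have h1 : 1 + |Real.log x| ≤ x := by
    rw [abs_of_nonneg (Real.log_nonneg hx)]
    linarith [Real.log_le_sub_one_of_pos hx0]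
  have h2 : x ≤ 16 * Real.exp (x/16) := by
    have := Real.add_one_le_exp (x/16)
    nlinarith [Real.exp_pos (x/16)]
  have h3 : Real.exp (x/16) * Real.exp (-x/8) = Real.exp (-x/16) := by
    rw [← Real.exp_add]; congr 1; ring
  calc C₀ * (1 + |Real.log x|) * Real.exp (-x/8)
      ≤ C₀ * x * Real.exp (-x/8) :=
        mul_le_mul_of_nonneg_right (mul_le_mul_of_nonneg_left h1 hC₀) (Real.exp_pos _).le
    _ ≤ C₀ * (16 * Real.exp (x/16)) * Real.exp (-x/8) :=
        mul_le_mul_of_nonneg_right (mul_le_mul_of_nonneg_left h2 hC₀) (Real.exp_pos _).le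
    _ = 16 * C₀ * (Real.exp (x/16) * Real.exp (-x/8)) := by ring
    _ = 16 * C₀ * Real.exp (-x/16) := by rw [h3]

set_option maxHeartbeats 2000000 in
/-- The integration-by-parts positivity argument of Section 4.2.1: given decay and
convexity conditions on the kernel `W`, the cosine transform
`∫_0^∞ W(x) cos(xξ) dx` is nonnegative for every frequency `ξ ≥ M`. -/
theorem cosine_transform_nonneg_of_convex_kernel
    (x₀ M C₀ : ℝ) (hx₀ : 0 < x₀) (hM : 0 < M) (hC₀ : 0 < C₀)
    (W : ℝ → ℝ)
    (hW : ContDiffOn ℝ 3 W (Ioi (0 : ℝ)))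
    (hW0 : ∀ x : ℝ, 0 < x → |W x| ≤ C₀ * (1 + |Real.log x|) * Real.exp (-x / 8))
    (hW1 : ∀ x : ℝ, 0 < x → |deriv W x| ≤ C₀ * x⁻¹ * Real.exp (-x / 8))
    (hW2 : ∀ x : ℝ, 0 < x → |deriv (deriv W) x| ≤ C₀ * x⁻¹ ^ 2 * Real.exp (-x / 8))
    (hconv : ∀ x ∈ Ioc (0 : ℝ) x₀, 0 ≤ deriv (deriv W) x)
    (hW3int : IntegrableOn (fun x => |deriv (deriv (deriv W)) x|) (Ioi x₀))
    (hcond : 0 ≤ -deriv W x₀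
        - (1 / M) * (|deriv (deriv W) x₀|
          + ∫ x in Ioi x₀, |deriv (deriv (deriv W)) x|)) :
    ∀ ξ : ℝ, M ≤ ξ → 0 ≤ ∫ x in Ioi (0 : ℝ), W x * Real.cos (x * ξ) := by
  intro ξ hξ
  have hξ0 : 0 < ξ := lt_of_lt_of_le hM hξ
  set W1 : ℝ → ℝ := deriv W with hW1def
  set W2 : ℝ → ℝ := deriv W1 with hW2def
  set W3 : ℝ → ℝ := deriv W2 with hW3def
  -- differentiability
  have hWd : ∀ x ∈ Ioi (0:ℝ), HasDerivAt W (W1 x) x := by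
    intro x hx
    exact ((hW.differentiableOn (by norm_num)).differentiableAt
      (isOpen_Ioi.mem_nhds hx)).hasDerivAt
  have hW1cd : ContDiffOn ℝ 2 W1 (Ioi (0:ℝ)) :=
    hW.deriv_of_isOpen isOpen_Ioi (by norm_num)
  have hW1d : ∀ x ∈ Ioi (0:ℝ), HasDerivAt W1 (W2 x) x := by
    intro x hx
    exact ((hW1cd.differentiableOn (by norm_num)).differentiableAt
      (isOpen_Ioi.mem_nhds hx)).hasDerivAt
  have hW2cd : ContDiffOn ℝ 1 W2 (Ioi (0:ℝ)) :=
    hW1cd.deriv_of_isOpen isOpen_Ioi (by norm_num)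
  have hW2d : ∀ x ∈ Ioi (0:ℝ), HasDerivAt W2 (W3 x) x := by
    intro x hx
    exact ((hW2cd.differentiableOn (by norm_num)).differentiableAt
      (isOpen_Ioi.mem_nhds hx)).hasDerivAt
  have mW1 : Measurable W1 := hW1def ▸ measurable_deriv W
  have mW2 : Measurable W2 := hW2def ▸ measurable_deriv W1
  have mW3 : Measurable W3 := hW3def ▸ measurable_deriv W2
  -- trig derivatives
  have hsin : ∀ x : ℝ, HasDerivAt (fun y => Real.sin (y * ξ)) (Real.cos (x * ξ) * ξ) x := by
    intro x
    simpa [Function.comp_def] using (Real.hasDerivAt_sin (x * ξ)).comp x ((hasDerivAt_id x).mul_const ξ)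
  have hcosd : ∀ x : ℝ, HasDerivAt (fun y => Real.cos (y * ξ)) (-(Real.sin (x * ξ) * ξ)) x := by
    intro x
    simpa [Function.comp_def] using (Real.hasDerivAt_cos (x * ξ)).comp x ((hasDerivAt_id x).mul_const ξ)
  have h1mc : ∀ x : ℝ, HasDerivAt (fun y => 1 - Real.cos (y * ξ)) (Real.sin (x * ξ) * ξ) x := by
    intro x
    simpa [Pi.sub_def] using (hasDerivAt_const x (1:ℝ)).sub (hcosd x)
  -- basic facts
  have hexple1 : ∀ x : ℝ, 0 < x → Real.exp (-x / 8) ≤ 1 := by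
    intro x hx
    rw [← Real.exp_zero]
    apply Real.exp_le_exp.2
    linarith
  have habs_sin : ∀ x : ℝ, 0 < x → |Real.sin (x * ξ)| ≤ x * ξ := by
    intro x hx
    calc |Real.sin (x * ξ)| ≤ |x * ξ| := Real.abs_sin_le_abs
      _ = x * ξ := abs_of_pos (by positivity)
  have h1mc_nonneg : ∀ t : ℝ, 0 ≤ 1 - Real.cos t := fun t => by
    linarith [Real.cos_le_one t]
  have habs_1mc : ∀ x : ℝ, 0 < x → |1 - Real.cos (x * ξ)| ≤ (x * ξ) ^ 2 / 2 := by
    intro x hx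
    rw [abs_of_nonneg (h1mc_nonneg _)]
    exact one_sub_cos_le_half_sq _
  -- integrability of the five integrands
  have hcont_cos : Continuous (fun x : ℝ => Real.cos (x * ξ)) :=
    Real.continuous_cos.comp (continuous_id.mul continuous_const)
  have hcont_sin : Continuous (fun x : ℝ => Real.sin (x * ξ)) :=
    Real.continuous_sin.comp (continuous_id.mul continuous_const)
  have hcont_1mc : Continuous (fun x : ℝ => 1 - Real.cos (x * ξ)) :=
    continuous_const.sub hcont_cos
  have IntW : IntegrableOn (fun x => W x * Real.cos (x * ξ)) (Ioi (0:ℝ)) := by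
    have hWcont : ContinuousOn (fun x => W x * Real.cos (x * ξ)) (Ioi (0:ℝ)) :=
      hW.continuousOn.mul hcont_cos.continuousOn
    have piece1 : IntegrableOn (fun x => W x * Real.cos (x * ξ)) (Ioc (0:ℝ) 1) := by
      have hrpow : IntegrableOn (fun x : ℝ => x ^ (-(1/2):ℝ)) (Ioc (0:ℝ) 1) := by
        rw [← intervalIntegrable_iff_integrableOn_Ioc_of_le zero_le_one]
        exact intervalIntegral.intervalIntegrable_rpow' (by norm_num)
      have hg1 : IntegrableOn (fun x : ℝ => C₀ + 2 * C₀ * x ^ (-(1/2):ℝ)) (Ioc (0:ℝ) 1) := by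
        have hc : IntegrableOn (fun _ : ℝ => C₀) (Ioc (0:ℝ) 1) :=
          integrableOn_const measure_Ioc_lt_top.ne
        exact (hc.add (hrpow.const_mul (2 * C₀))).congr (ae_of_all _ fun x => rfl)
      have hm1 : AEStronglyMeasurable (fun x => W x * Real.cos (x * ξ))
          (volume.restrict (Ioc (0:ℝ) 1)) :=
        (hWcont.mono Ioc_subset_Ioi_self).aestronglyMeasurable measurableSet_Ioc
      apply Integrable.mono' hg1 hm1
      rw [ae_restrict_iff' measurableSet_Ioc]
      apply ae_of_all
      rintro x ⟨hx0, hx1⟩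
      rw [Real.norm_eq_abs]
      have hlog := abs_log_le_two_rpow hx0 hx1
      calc |W x * Real.cos (x * ξ)| ≤ (C₀ * (1 + |Real.log x|) * Real.exp (-x/8)) * 1 :=
            abs_mul_le_of_le' (hW0 x hx0) (Real.abs_cos_le_one _) zero_le_one
        _ ≤ (C₀ * (1 + |Real.log x|) * 1) * 1 := by
            have h := hexple1 x hx0
            have hnn : (0:ℝ) ≤ C₀ * (1 + |Real.log x|) := by positivity
            nlinarith
        _ = C₀ * (1 + |Real.log x|) := by ring
        _ ≤ C₀ * (1 + 2 * x ^ (-(1/2):ℝ)) := by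
            apply mul_le_mul_of_nonneg_left _ hC₀.le
            linarith
        _ = C₀ + 2 * C₀ * x ^ (-(1/2):ℝ) := by ring
    have piece2 : IntegrableOn (fun x => W x * Real.cos (x * ξ)) (Ioi (1:ℝ)) := by
      have hg2 : IntegrableOn (fun x : ℝ => 16 * C₀ * Real.exp (-x/16)) (Ioi (1:ℝ)) :=
        (integrableOn_exp_neg_div 16 1 (by norm_num)).const_mul (16 * C₀)
      have hm2 : AEStronglyMeasurable (fun x => W x * Real.cos (x * ξ))
          (volume.restrict (Ioi (1:ℝ))) :=
        (hWcont.mono (Ioi_subset_Ioi zero_le_one)).aestronglyMeasurable measurableSet_Ioi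
      apply Integrable.mono' hg2 hm2
      rw [ae_restrict_iff' measurableSet_Ioi]
      apply ae_of_all
      intro x hx
      rw [mem_Ioi] at hx
      have hx0 : (0:ℝ) < x := lt_trans zero_lt_one hx
      rw [Real.norm_eq_abs]
      calc |W x * Real.cos (x * ξ)| ≤ (C₀ * (1 + |Real.log x|) * Real.exp (-x/8)) * 1 :=
            abs_mul_le_of_le' (hW0 x hx0) (Real.abs_cos_le_one _) zero_le_one
        _ = C₀ * (1 + |Real.log x|) * Real.exp (-x/8) := mul_one _
        _ ≤ 16 * C₀ * Real.exp (-x/16) := decay_bound_big C₀ hC₀.le hx.le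
    rw [show Ioi (0:ℝ) = Ioc (0:ℝ) 1 ∪ Ioi 1 from (Ioc_union_Ioi_eq_Ioi zero_le_one).symm]
    exact piece1.union piece2
  have Int1 : IntegrableOn (fun x => W1 x * Real.sin (x * ξ)) (Ioi (0:ℝ)) := by
    have hg : IntegrableOn (fun x : ℝ => C₀ * ξ * Real.exp (-x/8)) (Ioi (0:ℝ)) :=
      (integrableOn_exp_neg_div 8 0 (by norm_num)).const_mul (C₀ * ξ)
    have hm : AEStronglyMeasurable (fun x => W1 x * Real.sin (x * ξ))
        (volume.restrict (Ioi (0:ℝ))) :=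
      (mW1.mul hcont_sin.measurable).aestronglyMeasurable
    apply Integrable.mono' hg hm
    rw [ae_restrict_iff' measurableSet_Ioi]
    apply ae_of_all
    intro x hx
    rw [mem_Ioi] at hx
    rw [Real.norm_eq_abs]
    calc |W1 x * Real.sin (x * ξ)| ≤ (C₀ * x⁻¹ * Real.exp (-x/8)) * (x * ξ) :=
          abs_mul_le_of_le' (hW1 x hx) (habs_sin x hx) (by positivity)
      _ = C₀ * ξ * Real.exp (-x/8) := by field_simp
  have Int2c : IntegrableOn (fun x => W2 x * (1 - Real.cos (x * ξ))) (Ioc (0:ℝ) x₀) := by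
    have hg : IntegrableOn (fun _ : ℝ => C₀ * ξ ^ 2 / 2) (Ioc (0:ℝ) x₀) :=
      integrableOn_const measure_Ioc_lt_top.ne
    have hm : AEStronglyMeasurable (fun x => W2 x * (1 - Real.cos (x * ξ)))
        (volume.restrict (Ioc (0:ℝ) x₀)) :=
      (mW2.mul hcont_1mc.measurable).aestronglyMeasurable
    apply Integrable.mono' hg hm
    rw [ae_restrict_iff' measurableSet_Ioc]
    apply ae_of_all
    rintro x ⟨hx0, _⟩
    rw [Real.norm_eq_abs]
    have hxne : x ≠ 0 := ne_of_gt hx0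
    calc |W2 x * (1 - Real.cos (x * ξ))| ≤ (C₀ * x⁻¹ ^ 2 * Real.exp (-x/8)) * ((x * ξ) ^ 2 / 2) :=
          abs_mul_le_of_le' (hW2 x hx0) (habs_1mc x hx0) (by positivity)
      _ = C₀ * ξ ^ 2 / 2 * Real.exp (-x/8) := by field_simp
      _ ≤ C₀ * ξ ^ 2 / 2 * 1 :=
          mul_le_mul_of_nonneg_left (hexple1 x hx0) (by positivity)
      _ = C₀ * ξ ^ 2 / 2 := mul_one _
  have Int2 : IntegrableOn (fun x => W2 x * Real.cos (x * ξ)) (Ioi x₀) := by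
    have hg : IntegrableOn (fun x : ℝ => C₀ * x₀⁻¹ ^ 2 * Real.exp (-x/8)) (Ioi x₀) :=
      (integrableOn_exp_neg_div 8 x₀ (by norm_num)).const_mul (C₀ * x₀⁻¹ ^ 2)
    have hm : AEStronglyMeasurable (fun x => W2 x * Real.cos (x * ξ))
        (volume.restrict (Ioi x₀)) :=
      (mW2.mul hcont_cos.measurable).aestronglyMeasurable
    apply Integrable.mono' hg hm
    rw [ae_restrict_iff' measurableSet_Ioi]
    apply ae_of_all
    intro x hx
    rw [mem_Ioi] at hx
    have hx0 : (0:ℝ) < x := lt_trans hx₀ hx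
    rw [Real.norm_eq_abs]
    calc |W2 x * Real.cos (x * ξ)| ≤ (C₀ * x⁻¹ ^ 2 * Real.exp (-x/8)) * 1 :=
          abs_mul_le_of_le' (hW2 x hx0) (Real.abs_cos_le_one _) zero_le_one
      _ = C₀ * x⁻¹ ^ 2 * Real.exp (-x/8) := mul_one _
      _ ≤ C₀ * x₀⁻¹ ^ 2 * Real.exp (-x/8) := by
          apply mul_le_mul_of_nonneg_right _ (Real.exp_pos _).le
          exact mul_le_mul_of_nonneg_left
            (pow_le_pow_left₀ (by positivity) (inv_anti₀ hx₀ hx.le) 2) hC₀.le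
  have IntW3 : IntegrableOn W3 (Ioi x₀) := by
    exact (integrable_norm_iff (mW3.aestronglyMeasurable)).1
      (by simpa [Real.norm_eq_abs, IntegrableOn] using hW3int)
  have Int3 : IntegrableOn (fun x => W3 x * Real.sin (x * ξ)) (Ioi x₀) := by
    have hm : AEStronglyMeasurable (fun x => W3 x * Real.sin (x * ξ))
        (volume.restrict (Ioi x₀)) :=
      (mW3.mul hcont_sin.measurable).aestronglyMeasurable
    apply Integrable.mono' hW3int hm
    apply ae_of_all
    intro x
    rw [Real.norm_eq_abs, abs_mul]
    calc |W3 x| * |Real.sin (x * ξ)| ≤ |W3 x| * 1 :=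
        mul_le_mul_of_nonneg_left (Real.abs_sin_le_one _) (abs_nonneg _)
      _ = |W3 x| := mul_one _
  -- limits
  have hIoo : Ioo (0:ℝ) 1 ∈ nhdsWithin (0:ℝ) (Ioi 0) :=
    Ioo_mem_nhdsGT_of_mem ⟨le_refl 0, zero_lt_one⟩
  have hxid : Tendsto (fun x : ℝ => x) (nhdsWithin 0 (Ioi 0)) (nhds 0) :=
    tendsto_id.mono_left nhdsWithin_le_nhds
  have hlogmul : Tendsto (fun x : ℝ => Real.log x * x) (nhdsWithin 0 (Ioi 0)) (nhds 0) := by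
    have := tendsto_log_mul_rpow_nhdsGT_zero zero_lt_one
    refine this.congr' ?_
    filter_upwards [self_mem_nhdsWithin] with x _
    rw [Real.rpow_one]
  have lim0_Wsin : Tendsto (fun x => W x * Real.sin (x * ξ)) (nhdsWithin 0 (Ioi 0)) (nhds 0) := by
    apply squeeze_zero_norm' (a := fun x => C₀ * ξ * (x - Real.log x * x))
    · filter_upwards [hIoo] with x hx
      obtain ⟨hx0, hx1⟩ := hx
      have hl : |Real.log x| = -Real.log x := abs_of_nonpos (Real.log_nonpos hx0.le hx1.le)
      rw [Real.norm_eq_abs]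
      calc |W x * Real.sin (x * ξ)| ≤ (C₀ * (1 + |Real.log x|) * Real.exp (-x/8)) * (x * ξ) :=
            abs_mul_le_of_le' (hW0 x hx0) (habs_sin x hx0) (by positivity)
        _ ≤ (C₀ * (1 + |Real.log x|) * 1) * (x * ξ) :=
            mul_le_mul_of_nonneg_right
              (mul_le_mul_of_nonneg_left (hexple1 x hx0) (by positivity))
              (mul_nonneg hx0.le hξ0.le)
        _ = C₀ * ξ * (x - Real.log x * x) := by rw [hl]; ring
    · have := (hxid.sub hlogmul).const_mul (C₀ * ξ)
      simpa using this
  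
  have limtop_Wsin : Tendsto (fun x => W x * Real.sin (x * ξ)) atTop (nhds 0) := by
    apply squeeze_zero_norm' (a := fun x => 16 * C₀ * Real.exp (-x/16))
    · filter_upwards [eventually_ge_atTop (1:ℝ)] with x hx
      have hx0 : (0:ℝ) < x := lt_of_lt_of_le zero_lt_one hx
      rw [Real.norm_eq_abs]
      calc |W x * Real.sin (x * ξ)| ≤ (C₀ * (1 + |Real.log x|) * Real.exp (-x/8)) * 1 :=
            abs_mul_le_of_le' (hW0 x hx0) (Real.abs_sin_le_one _) zero_le_one
        _ = C₀ * (1 + |Real.log x|) * Real.exp (-x/8) := mul_one _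
        _ ≤ 16 * C₀ * Real.exp (-x/16) := decay_bound_big C₀ hC₀.le hx
    · simpa using (tendsto_exp_neg_div_atTop 16 (by norm_num)).const_mul (16 * C₀)
  have lim0_W1 : Tendsto (fun x => W1 x * (1 - Real.cos (x * ξ))) (nhdsWithin 0 (Ioi 0)) (nhds 0) := by
    apply squeeze_zero_norm' (a := fun x => C₀ * ξ ^ 2 / 2 * x)
    · filter_upwards [hIoo] with x hx
      obtain ⟨hx0, _⟩ := hx
      rw [Real.norm_eq_abs]
      calc |W1 x * (1 - Real.cos (x * ξ))| ≤ (C₀ * x⁻¹ * Real.exp (-x/8)) * ((x * ξ) ^ 2 / 2) :=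
            abs_mul_le_of_le' (hW1 x hx0) (habs_1mc x hx0) (by positivity)
        _ ≤ (C₀ * x⁻¹ * 1) * ((x * ξ) ^ 2 / 2) :=
            mul_le_mul_of_nonneg_right
              (mul_le_mul_of_nonneg_left (hexple1 x hx0)
                (mul_nonneg hC₀.le (inv_nonneg.2 hx0.le)))
              (by positivity)
        _ = C₀ * ξ ^ 2 / 2 * x := by field_simp
    · simpa using (hxid.const_mul (C₀ * ξ ^ 2 / 2))
  have limtop_W1 : Tendsto (fun x => W1 x * Real.cos (x * ξ)) atTop (nhds 0) := by
    apply squeeze_zero_norm' (a := fun x => C₀ * Real.exp (-x/8))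
    · filter_upwards [eventually_ge_atTop (1:ℝ)] with x hx
      have hx0 : (0:ℝ) < x := lt_of_lt_of_le zero_lt_one hx
      have hinv : x⁻¹ ≤ 1 := by simpa using inv_anti₀ zero_lt_one hx
      rw [Real.norm_eq_abs]
      calc |W1 x * Real.cos (x * ξ)| ≤ (C₀ * x⁻¹ * Real.exp (-x/8)) * 1 :=
            abs_mul_le_of_le' (hW1 x hx0) (Real.abs_cos_le_one _) zero_le_one
        _ = C₀ * x⁻¹ * Real.exp (-x/8) := mul_one _
        _ ≤ C₀ * 1 * Real.exp (-x/8) :=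
            mul_le_mul_of_nonneg_right (mul_le_mul_of_nonneg_left hinv hC₀.le)
              (Real.exp_pos _).le
        _ = C₀ * Real.exp (-x/8) := by ring
    · simpa using (tendsto_exp_neg_div_atTop 8 (by norm_num)).const_mul C₀
  have limtop_W2 : Tendsto (fun x => W2 x * Real.sin (x * ξ)) atTop (nhds 0) := by
    apply squeeze_zero_norm' (a := fun x => C₀ * Real.exp (-x/8))
    · filter_upwards [eventually_ge_atTop (1:ℝ)] with x hx
      have hx0 : (0:ℝ) < x := lt_of_lt_of_le zero_lt_one hx
      have hinv : x⁻¹ ≤ 1 := by simpa using inv_anti₀ zero_lt_one hx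
      have hinv2 : x⁻¹ ^ 2 ≤ 1 := by
        calc x⁻¹ ^ 2 ≤ 1 ^ 2 := pow_le_pow_left₀ (inv_nonneg.2 hx0.le) hinv 2
          _ = 1 := one_pow 2
      rw [Real.norm_eq_abs]
      calc |W2 x * Real.sin (x * ξ)| ≤ (C₀ * x⁻¹ ^ 2 * Real.exp (-x/8)) * 1 :=
            abs_mul_le_of_le' (hW2 x hx0) (Real.abs_sin_le_one _) zero_le_one
        _ = C₀ * x⁻¹ ^ 2 * Real.exp (-x/8) := mul_one _
        _ ≤ C₀ * 1 * Real.exp (-x/8) :=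
            mul_le_mul_of_nonneg_right (mul_le_mul_of_nonneg_left hinv2 hC₀.le)
              (Real.exp_pos _).le
        _ = C₀ * Real.exp (-x/8) := by ring
    · simpa using (tendsto_exp_neg_div_atTop 8 (by norm_num)).const_mul C₀
  -- Step A : integration by parts on (0, ∞)
  have EA : (∫ x in Ioi (0:ℝ), W1 x * Real.sin (x * ξ))
      + (∫ x in Ioi (0:ℝ), W x * Real.cos (x * ξ)) * ξ = 0 := by
    have h := ftc_Ioi_sing (fun x => W x * Real.sin (x * ξ))
      (fun x => W1 x * Real.sin (x * ξ) + W x * (Real.cos (x * ξ) * ξ))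
      (fun x hx => (hWd x hx).mul (hsin x))
      ?_ lim0_Wsin limtop_Wsin
    · have hcongr : (fun x => W x * (Real.cos (x * ξ) * ξ))
          = fun x => (W x * Real.cos (x * ξ)) * ξ := by funext x; ring
      rw [integral_add Int1 (by rw [hcongr]; exact IntW.mul_const ξ)] at h
      rw [hcongr, integral_mul_const] at h
      exact h
    · have hcongr : (fun x => W1 x * Real.sin (x * ξ) + W x * (Real.cos (x * ξ) * ξ))
          = fun x => W1 x * Real.sin (x * ξ) + (W x * Real.cos (x * ξ)) * ξ := by
        funext x; ring
      rw [hcongr]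
      exact Int1.add (IntW.mul_const ξ)
  -- Step C : integration by parts on (0, x₀]
  have EC : (∫ x in Ioc (0:ℝ) x₀, W2 x * (1 - Real.cos (x * ξ)))
      + (∫ x in Ioc (0:ℝ) x₀, W1 x * Real.sin (x * ξ)) * ξ
      = W1 x₀ * (1 - Real.cos (x₀ * ξ)) := by
    have Int1c : IntegrableOn (fun x => W1 x * Real.sin (x * ξ)) (Ioc (0:ℝ) x₀) :=
      Int1.mono_set Ioc_subset_Ioi_self
    have h := ftc_Ioc_sing x₀ hx₀ (fun x => W1 x * (1 - Real.cos (x * ξ)))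
      (fun x => W2 x * (1 - Real.cos (x * ξ)) + W1 x * (Real.sin (x * ξ) * ξ))
      (fun x hx => (hW1d x hx).mul (h1mc x))
      ?_ lim0_W1
    · have hcongr : (fun x => W1 x * (Real.sin (x * ξ) * ξ))
          = fun x => (W1 x * Real.sin (x * ξ)) * ξ := by funext x; ring
      rw [integral_add Int2c (by rw [hcongr]; exact Int1c.mul_const ξ)] at h
      rw [hcongr, integral_mul_const] at h
      exact h
    · have hcongr : (fun x => W2 x * (1 - Real.cos (x * ξ)) + W1 x * (Real.sin (x * ξ) * ξ))
          = fun x => W2 x * (1 - Real.cos (x * ξ)) + (W1 x * Real.sin (x * ξ)) * ξ := by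
        funext x; ring
      rw [hcongr]
      exact Int2c.add (Int1c.mul_const ξ)
  -- Step D : integration by parts on (x₀, ∞) for W1 · cos
  have ED : (∫ x in Ioi x₀, W2 x * Real.cos (x * ξ))
      - (∫ x in Ioi x₀, W1 x * Real.sin (x * ξ)) * ξ
      = - (W1 x₀ * Real.cos (x₀ * ξ)) := by
    have Int1t : IntegrableOn (fun x => W1 x * Real.sin (x * ξ)) (Ioi x₀) :=
      Int1.mono_set (Ioi_subset_Ioi hx₀.le)
    have h := integral_Ioi_of_hasDerivAt_of_tendsto
      (f := fun x => W1 x * Real.cos (x * ξ))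
      (f' := fun x => W2 x * Real.cos (x * ξ) + W1 x * -(Real.sin (x * ξ) * ξ))
      (((hW1d x₀ hx₀).mul (hcosd x₀)).continuousAt.continuousWithinAt)
      (fun x hx => (hW1d x (lt_trans hx₀ hx)).mul (hcosd x))
      ?_ limtop_W1
    · have hcongr : (fun x => W1 x * -(Real.sin (x * ξ) * ξ))
          = fun x => -((W1 x * Real.sin (x * ξ)) * ξ) := by funext x; ring
      rw [integral_add Int2 (by rw [hcongr]; exact (Int1t.mul_const ξ).neg)] at h
      rw [hcongr, integral_neg, integral_mul_const] at h
      rw [zero_sub] at h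
      linarith [h]
    · have hcongr : (fun x => W2 x * Real.cos (x * ξ) + W1 x * -(Real.sin (x * ξ) * ξ))
          = fun x => W2 x * Real.cos (x * ξ) + -((W1 x * Real.sin (x * ξ)) * ξ) := by
        funext x; ring
      rw [hcongr]
      exact Int2.add (Int1t.mul_const ξ).neg
  -- Step E : integration by parts on (x₀, ∞) for W2 · sin
  have EE : (∫ x in Ioi x₀, W3 x * Real.sin (x * ξ))
      + (∫ x in Ioi x₀, W2 x * Real.cos (x * ξ)) * ξ
      = - (W2 x₀ * Real.sin (x₀ * ξ)) := by
    have h := integral_Ioi_of_hasDerivAt_of_tendsto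
      (f := fun x => W2 x * Real.sin (x * ξ))
      (f' := fun x => W3 x * Real.sin (x * ξ) + W2 x * (Real.cos (x * ξ) * ξ))
      (((hW2d x₀ hx₀).mul (hsin x₀)).continuousAt.continuousWithinAt)
      (fun x hx => (hW2d x (lt_trans hx₀ hx)).mul (hsin x))
      ?_ limtop_W2
    · have hcongr : (fun x => W2 x * (Real.cos (x * ξ) * ξ))
          = fun x => (W2 x * Real.cos (x * ξ)) * ξ := by funext x; ring
      rw [integral_add Int3 (by rw [hcongr]; exact Int2.mul_const ξ)] at h
      rw [hcongr, integral_mul_const] at h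
      rw [zero_sub] at h
      exact h
    · have hcongr : (fun x => W3 x * Real.sin (x * ξ) + W2 x * (Real.cos (x * ξ) * ξ))
          = fun x => W3 x * Real.sin (x * ξ) + (W2 x * Real.cos (x * ξ)) * ξ := by
        funext x; ring
      rw [hcongr]
      exact Int3.add (Int2.mul_const ξ)
  -- assemble
  set A1 := ∫ x in Ioc (0:ℝ) x₀, W1 x * Real.sin (x * ξ) with hA1
  set A2 := ∫ x in Ioi x₀, W1 x * Real.sin (x * ξ) with hA2
  set K := ∫ x in Ioi x₀, W2 x * Real.cos (x * ξ) with hK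
  set B := |W2 x₀| + ∫ x in Ioi x₀, |W3 x| with hB
  have hBnn : 0 ≤ B := by
    have : 0 ≤ ∫ x in Ioi x₀, |W3 x| := integral_nonneg (fun x => abs_nonneg _)
    positivity
  have hsplit : (∫ x in Ioi (0:ℝ), W1 x * Real.sin (x * ξ)) = A1 + A2 := by
    rw [← Ioc_union_Ioi_eq_Ioi hx₀.le]
    exact setIntegral_union (Ioc_disjoint_Ioi le_rfl) measurableSet_Ioi
      (Int1.mono_set Ioc_subset_Ioi_self) (Int1.mono_set (Ioi_subset_Ioi hx₀.le))
  -- bound on K : K * ξ ≤ B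
  have hKb : K * ξ ≤ B := by
    have h1 : |∫ x in Ioi x₀, W3 x * Real.sin (x * ξ)| ≤ ∫ x in Ioi x₀, |W3 x| := by
      calc |∫ x in Ioi x₀, W3 x * Real.sin (x * ξ)|
          ≤ ∫ x in Ioi x₀, |W3 x| * |Real.sin (x * ξ)| := by
            have h := norm_integral_le_integral_norm (μ := volume.restrict (Ioi x₀))
              (fun x => W3 x * Real.sin (x * ξ))
            simpa [Real.norm_eq_abs, abs_mul] using h
        _ ≤ ∫ x in Ioi x₀, |W3 x| := by
            apply integral_mono (Int3.abs.congr (ae_of_all _ fun x => abs_mul _ _)) hW3int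
            intro x
            show |W3 x| * |Real.sin (x * ξ)| ≤ |W3 x|
            calc |W3 x| * |Real.sin (x * ξ)| ≤ |W3 x| * 1 :=
                mul_le_mul_of_nonneg_left (Real.abs_sin_le_one _) (abs_nonneg _)
              _ = |W3 x| := mul_one _
    have h2 : |W2 x₀ * Real.sin (x₀ * ξ)| ≤ |W2 x₀| := by
      rw [abs_mul]
      calc |W2 x₀| * |Real.sin (x₀ * ξ)| ≤ |W2 x₀| * 1 :=
          mul_le_mul_of_nonneg_left (Real.abs_sin_le_one _) (abs_nonneg _)
        _ = |W2 x₀| := mul_one _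
    have := abs_le.1 h1
    have := abs_le.1 h2
    rw [hB]
    -- from EE : K * ξ = -(W2 x₀ * sin) - ∫ W3 sin
    have hKξ : K * ξ = -(W2 x₀ * Real.sin (x₀ * ξ)) - ∫ x in Ioi x₀, W3 x * Real.sin (x * ξ) := by
      linarith [EE]
    linarith [abs_le.1 h1, abs_le.1 h2]
  -- A1 bound
  have hA1b : A1 * ξ ≤ W1 x₀ * (1 - Real.cos (x₀ * ξ)) := by
    have hpos : 0 ≤ ∫ x in Ioc (0:ℝ) x₀, W2 x * (1 - Real.cos (x * ξ)) := by
      apply setIntegral_nonneg measurableSet_Ioc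
      intro x hx
      exact mul_nonneg (hconv x hx) (h1mc_nonneg _)
    linarith [EC]
  -- A2 equation
  have hA2b : A2 * ξ = W1 x₀ * Real.cos (x₀ * ξ) + K := by linarith [ED]
  -- total bound
  have hAle : (A1 + A2) * ξ * ξ ≤ (W1 x₀ + B / M) * ξ := by
    have h1 : (A1 + A2) * ξ = A1 * ξ + A2 * ξ := by ring
    have h2 : (A1 + A2) * ξ ≤ W1 x₀ + K := by
      rw [h1, hA2b]
      have : W1 x₀ * (1 - Real.cos (x₀ * ξ)) + (W1 x₀ * Real.cos (x₀ * ξ) + K) = W1 x₀ + K := by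
        ring
      linarith [hA1b]
    have h3 : K * ξ ≤ (B / M) * ξ := by
      calc K * ξ ≤ B := hKb
        _ = (B / M) * M := by field_simp
        _ ≤ (B / M) * ξ := mul_le_mul_of_nonneg_left hξ (by positivity)
    have h4 : (A1 + A2) * ξ * ξ ≤ (W1 x₀ + K) * ξ :=
      mul_le_mul_of_nonneg_right h2 hξ0.le
    nlinarith
  have hfinal : W1 x₀ + B / M ≤ 0 := by
    have hBM : B / M = 1 / M * B := by ring
    rw [hBM]
    linarith [hcond]
  have hA : A1 + A2 ≤ 0 := by
    have h5 : (W1 x₀ + B / M) * ξ ≤ 0 := mul_nonpos_of_nonpos_of_nonneg hfinal hξ0.le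
    nlinarith [mul_pos hξ0 hξ0]
  rw [hsplit] at EA
  nlinarith [EA, hA, hξ0]
end

section
/- Let α ∈ (0, 1) and A > 0, and let f : (0, π] → ℝ be twice continuously differentiable with f(x) = 0 for all x ∈ [π/4, π], and |f(x)| ≤ A x^α, |f'(x)| ≤ A x^{α−1}, |f''(x)| ≤ A x^{α−2} for all x ∈ (0, π/4]. Then there exists a constant C depending only on α such that for every integer k ≥ 1: | ∫_0^π f(x) sin(kx) dx | ≤ C · A · k^{−1−α}. -/
open MeasureTheory Real Set

set_option maxHeartbeats 2000000 in
/-- Fourier sine-coefficient decay estimate underlying Lemma A.6: if `f` is twice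
continuously differentiable on `(0, π]`, vanishes on `[π/4, π]`, and satisfies
`|f| ≤ A x^α`, `|f'| ≤ A x^{α-1}`, `|f''| ≤ A x^{α-2}` on `(0, π/4]`, then
`|∫_0^π f(x) sin(kx) dx| ≤ C_α A k^{-1-α}` for every integer `k ≥ 1`. -/
theorem fourier_sine_decay :
    ∀ α : ℝ, 0 < α → α < 1 →
      ∃ C : ℝ, 0 < C ∧
        ∀ A : ℝ, 0 < A →
          ∀ f f' f'' : ℝ → ℝ,
            (∀ x ∈ Ioo (0 : ℝ) π, HasDerivAt f (f' x) x) →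
            (∀ x ∈ Ioo (0 : ℝ) π, HasDerivAt f' (f'' x) x) →
            ContinuousOn f'' (Ioo (0 : ℝ) π) →
            (∀ x ∈ Icc (π / 4) π, f x = 0) →
            (∀ x ∈ Ioc (0 : ℝ) (π / 4), |f x| ≤ A * x ^ α) →
            (∀ x ∈ Ioc (0 : ℝ) (π / 4), |f' x| ≤ A * x ^ (α - 1)) →
            (∀ x ∈ Ioc (0 : ℝ) (π / 4), |f'' x| ≤ A * x ^ (α - 2)) →
            ∀ k : ℕ, 1 ≤ k →
              |∫ x in (0:ℝ)..π, f x * Real.sin (k * x)|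
                ≤ C * A * (k : ℝ) ^ (-1 - α) := by
  intro α hα0 hα1
  have h1α : 0 < 1 - α := by linarith
  refine ⟨4 + 2/(1-α), by positivity, ?_⟩
  intro A hA f f' f'' hd1 hd2 hcont hzero hb0 hb1 hb2 k hk
  have hπ : (3:ℝ) < π := pi_gt_three
  have hπ0 : (0:ℝ) < π := by linarith
  set K : ℝ := (k : ℝ) with hKdef
  have hK1 : (1:ℝ) ≤ K := by rw [hKdef]; exact_mod_cast hk
  have hK0 : (0:ℝ) < K := by linarith
  set δ : ℝ := (2*K)⁻¹ with hδdef
  have hδ0 : 0 < δ := by positivity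
  have hδhalf : δ ≤ 1/2 := by
    rw [hδdef, inv_le_comm₀ (by linarith) (by norm_num)]
    simp only [one_div, inv_inv]
    linarith
  have hδπ4 : δ < π/4 := by linarith
  have hδπ2 : δ < π/2 := by linarith
  have hπ2π : π/2 < π := by linarith
  -- continuity of f, f'
  have hfc : ContinuousOn f (Ioo 0 π) := fun x hx => (hd1 x hx).continuousAt.continuousWithinAt
  have hf'c : ContinuousOn f' (Ioo 0 π) := fun x hx => (hd2 x hx).continuousAt.continuousWithinAt
  -- f' and f'' vanish on (π/4, π)
  have hf'0 : ∀ x ∈ Ioo (π/4) π, f' x = 0 := by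
    intro x hx
    have hev : f =ᶠ[nhds x] fun _ => (0:ℝ) := by
      filter_upwards [Ioo_mem_nhds hx.1 hx.2] with y hy
      exact hzero y ⟨hy.1.le, hy.2.le⟩
    have h1 : HasDerivAt (fun _ : ℝ => (0:ℝ)) (f' x) x :=
      (hd1 x ⟨by linarith [hx.1], hx.2⟩).congr_of_eventuallyEq hev.symm
    exact h1.unique (hasDerivAt_const x 0)
  have hf''0 : ∀ x ∈ Ioo (π/4) π, f'' x = 0 := by
    intro x hx
    have hev : f' =ᶠ[nhds x] fun _ => (0:ℝ) := by
      filter_upwards [Ioo_mem_nhds hx.1 hx.2] with y hy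
      exact hf'0 y hy
    have h1 : HasDerivAt (fun _ : ℝ => (0:ℝ)) (f'' x) x :=
      (hd2 x ⟨by linarith [hx.1], hx.2⟩).congr_of_eventuallyEq hev.symm
    exact h1.unique (hasDerivAt_const x 0)
  have hfπ2 : f (π/2) = 0 := hzero _ ⟨by linarith, by linarith⟩
  have hf'π2 : f' (π/2) = 0 := hf'0 _ ⟨by linarith, by linarith⟩
  set F : ℝ → ℝ := fun x => f x * Real.sin (K * x) with hFdef
  have hsinc : Continuous fun x : ℝ => Real.sin (K * x) :=
    Real.continuous_sin.comp (continuous_const.mul continuous_id)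
  have hcosc : Continuous fun x : ℝ => Real.cos (K * x) :=
    Real.continuous_cos.comp (continuous_const.mul continuous_id)
  -- integrability on [0, δ]
  have hIocδ : Ioc (0:ℝ) δ ⊆ Ioo 0 π := fun x hx => ⟨hx.1, by linarith [hx.2]⟩
  have hInt1 : IntervalIntegrable F volume 0 δ := by
    rw [intervalIntegrable_iff, uIoc_of_le hδ0.le]
    have hmeas : AEStronglyMeasurable F (volume.restrict (Ioc 0 δ)) :=
      ContinuousOn.aestronglyMeasurable
        ((hfc.mono hIocδ).mul hsinc.continuousOn) measurableSet_Ioc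
    refine Integrable.mono' (integrable_const (A * (π/4)^α)) hmeas ?_
    filter_upwards [ae_restrict_mem measurableSet_Ioc] with x hx
    have hx4 : x ∈ Ioc (0:ℝ) (π/4) := ⟨hx.1, by linarith [hx.2]⟩
    have h1 : |f x| ≤ A * x ^ α := hb0 x hx4
    have h2 : x ^ α ≤ (π/4) ^ α := Real.rpow_le_rpow hx.1.le hx4.2 hα0.le
    calc ‖F x‖ = |f x| * |Real.sin (K*x)| := abs_mul _ _
      _ ≤ (A * x ^ α) * 1 :=
          mul_le_mul h1 (Real.abs_sin_le_one _) (abs_nonneg _)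
            (mul_nonneg hA.le (Real.rpow_nonneg hx.1.le _))
      _ ≤ A * (π/4) ^ α := by rw [mul_one]; exact mul_le_mul_of_nonneg_left h2 hA.le
  -- integrability on [δ, π/2] (continuous there)
  have hIccsub : Icc δ (π/2) ⊆ Ioo 0 π := fun x hx => ⟨lt_of_lt_of_le hδ0 hx.1, by linarith [hx.2]⟩
  have hInt2 : IntervalIntegrable F volume δ (π/2) := by
    apply ContinuousOn.intervalIntegrable
    rw [uIcc_of_le hδπ2.le]
    exact (hfc.mono hIccsub).mul hsinc.continuousOn
  -- integral over [π/2, π] vanishes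
  have hEq0 : EqOn F (fun _ => (0:ℝ)) (Icc (π/2) π) := by
    intro x hx
    have : f x = 0 := hzero x ⟨by linarith [hx.1], hx.2⟩
    simp [hFdef, this]
  have hInt3 : IntervalIntegrable F volume (π/2) π := by
    rw [intervalIntegrable_iff, uIoc_of_le hπ2π.le]
    rw [integrableOn_congr_fun (hEq0.mono Ioc_subset_Icc_self) measurableSet_Ioc]
    exact integrableOn_zero
  have hI3 : (∫ x in (π/2)..π, F x) = 0 := by
    rw [intervalIntegral.integral_congr (g := fun _ => (0:ℝ)) (by rwa [uIcc_of_le hπ2π.le])]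
    simp
  -- split
  have hsplit : (∫ x in (0:ℝ)..π, F x)
      = (∫ x in (0:ℝ)..δ, F x) + (∫ x in δ..(π/2), F x) := by
    have h12 := intervalIntegral.integral_add_adjacent_intervals hInt1 hInt2
    have h123 := intervalIntegral.integral_add_adjacent_intervals (hInt1.trans hInt2) hInt3
    rw [← h123, ← h12, hI3, add_zero]
  -- rpow facts
  have hδK : δ ≤ K⁻¹ := by
    rw [hδdef]; apply inv_anti₀ hK0; linarith
  have hrpow1 : δ ^ α ≤ K ^ (-α) := by
    calc δ ^ α ≤ (K⁻¹) ^ α := Real.rpow_le_rpow hδ0.le hδK hα0.le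
      _ = K ^ (-α) := by rw [Real.inv_rpow hK0.le, ← Real.rpow_neg hK0.le]
  have hrpow2 : δ ^ (α-1) ≤ 2 * K ^ (1-α) := by
    have h1 : δ ^ (α-1) = (2*K) ^ (1-α) := by
      rw [hδdef, Real.inv_rpow (by positivity), ← Real.rpow_neg (by positivity)]
      congr 1; ring
    have h2 : (2*K) ^ (1-α) = (2:ℝ) ^ (1-α) * K ^ (1-α) :=
      Real.mul_rpow (by norm_num) hK0.le
    have h3 : (2:ℝ) ^ (1-α) ≤ 2 := by
      calc (2:ℝ) ^ (1-α) ≤ (2:ℝ) ^ (1:ℝ) :=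
            Real.rpow_le_rpow_of_exponent_le one_le_two (by linarith)
        _ = 2 := Real.rpow_one 2
    rw [h1, h2]
    exact mul_le_mul_of_nonneg_right h3 (Real.rpow_nonneg hK0.le _)
  have hrpow3 : δ ^ (α+2) ≤ K ^ (-(α+2)) := by
    calc δ ^ (α+2) ≤ (K⁻¹) ^ (α+2) := Real.rpow_le_rpow hδ0.le hδK (by linarith)
      _ = K ^ (-(α+2)) := by rw [Real.inv_rpow hK0.le, ← Real.rpow_neg hK0.le]
  have hKm : K * K ^ (-(α+2)) = K ^ (-1-α) := by
    rw [show (-1-α : ℝ) = 1 + (-(α+2)) by ring, Real.rpow_add hK0, Real.rpow_one]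
  have hKm2 : K ^ (1-α) * (K⁻¹ * K⁻¹) = K ^ (-1-α) := by
    rw [← Real.rpow_neg_one K, ← Real.rpow_add hK0, ← Real.rpow_add hK0]
    congr 1; ring
  have hKm3 : K ^ (-α) * K⁻¹ = K ^ (-1-α) := by
    rw [← Real.rpow_neg_one K, ← Real.rpow_add hK0]
    congr 1; ring
  have hKpow_pos : 0 < K ^ (-1-α) := Real.rpow_pos_of_pos hK0 _
  -- bound on [0, δ]
  have hI1 : |∫ x in (0:ℝ)..δ, F x| ≤ A * K ^ (-1-α) := by
    have hg : IntervalIntegrable (fun x : ℝ => A * K * x ^ (α+1)) volume 0 δ :=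
      (intervalIntegral.intervalIntegrable_rpow' (by linarith)).const_mul _
    have hbd : ∀ᵐ t ∂(volume.restrict (Set.uIoc (0:ℝ) δ)), ‖F t‖ ≤ A * K * t ^ (α+1) := by
      rw [uIoc_of_le hδ0.le]
      filter_upwards [ae_restrict_mem measurableSet_Ioc] with t ht
      have ht4 : t ∈ Ioc (0:ℝ) (π/4) := ⟨ht.1, by linarith [ht.2]⟩
      have h1 : |f t| ≤ A * t ^ α := hb0 t ht4
      have h2 : |Real.sin (K*t)| ≤ K * t := by
        calc |Real.sin (K*t)| ≤ |K*t| := Real.abs_sin_le_abs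
          _ = K * t := abs_of_pos (mul_pos hK0 ht.1)
      calc ‖F t‖ = |f t| * |Real.sin (K*t)| := abs_mul _ _
        _ ≤ (A * t ^ α) * (K * t) :=
            mul_le_mul h1 h2 (abs_nonneg _)
              (mul_nonneg hA.le (Real.rpow_nonneg ht.1.le _))
        _ = A * K * t ^ (α+1) := by
            rw [Real.rpow_add ht.1, Real.rpow_one]; ring
    have hmain := intervalIntegral.norm_integral_le_abs_of_norm_le hbd hg
    have hval : (∫ x in (0:ℝ)..δ, A * K * x ^ (α+1)) = A * K * (δ ^ (α+2) / (α+2)) := by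
      rw [intervalIntegral.integral_const_mul, integral_rpow (Or.inl (by linarith))]
      rw [Real.zero_rpow (by linarith)]
      ring_nf
    refine le_trans hmain ?_
    rw [hval, abs_of_nonneg (by positivity)]
    calc A * K * (δ ^ (α+2) / (α+2)) ≤ A * K * δ ^ (α+2) := by
          apply mul_le_mul_of_nonneg_left _ (by positivity)
          exact div_le_self (by positivity) (by linarith)
      _ ≤ A * (K * K ^ (-(α+2))) := by
          rw [← mul_assoc]
          exact mul_le_mul_of_nonneg_left hrpow3 (by positivity)
      _ = A * K ^ (-1-α) := by rw [hKm]
  -- integration by parts on [δ, π/2]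
  have hV : ∀ x : ℝ, HasDerivAt (fun y => -(Real.cos (K*y))/K) (Real.sin (K*x)) x := by
    intro x
    have h1 : HasDerivAt (fun y : ℝ => K*y) K x := by simpa using (hasDerivAt_id x).const_mul K
    have h3 := ((Real.hasDerivAt_cos (K*x)).comp x h1).neg.div_const K
    exact h3.congr_deriv (by rw [neg_mul, neg_neg, mul_div_assoc, div_self hK0.ne', mul_one])
  have hW : ∀ x : ℝ, HasDerivAt (fun y => Real.sin (K*y)/K) (Real.cos (K*x)) x := by
    intro x
    have h1 : HasDerivAt (fun y : ℝ => K*y) K x := by simpa using (hasDerivAt_id x).const_mul K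
    have h3 := ((Real.hasDerivAt_sin (K*x)).comp x h1).div_const K
    exact h3.congr_deriv (by rw [mul_div_assoc, div_self hK0.ne', mul_one])
  have huIcc : Set.uIcc δ (π/2) = Icc δ (π/2) := uIcc_of_le hδπ2.le
  have hf'int : IntervalIntegrable f' volume δ (π/2) := by
    apply ContinuousOn.intervalIntegrable
    rw [huIcc]; exact hf'c.mono hIccsub
  have hf''int : IntervalIntegrable f'' volume δ (π/2) := by
    apply ContinuousOn.intervalIntegrable
    rw [huIcc]; exact hcont.mono hIccsub
  have hIBP1 : (∫ x in δ..(π/2), F x)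
      = f (π/2) * (-(Real.cos (K*(π/2)))/K) - f δ * (-(Real.cos (K*δ))/K)
        - ∫ x in δ..(π/2), f' x * (-(Real.cos (K*x))/K) :=
    intervalIntegral.integral_mul_deriv_eq_deriv_mul
      (fun x hx => hd1 x (hIccsub (huIcc ▸ hx)))
      (fun x _ => hV x) hf'int (hsinc.intervalIntegrable _ _)
  have hIBP2 : (∫ x in δ..(π/2), f' x * Real.cos (K*x))
      = f' (π/2) * (Real.sin (K*(π/2))/K) - f' δ * (Real.sin (K*δ)/K)
        - ∫ x in δ..(π/2), f'' x * (Real.sin (K*x)/K) :=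
    intervalIntegral.integral_mul_deriv_eq_deriv_mul
      (fun x hx => hd2 x (hIccsub (huIcc ▸ hx)))
      (fun x _ => hW x) hf''int (hcosc.intervalIntegrable _ _)
  set J : ℝ := ∫ x in δ..(π/2), f'' x * Real.sin (K*x) with hJdef
  have hstep2 : (∫ x in δ..(π/2), f' x * (-(Real.cos (K*x))/K))
      = -K⁻¹ * ∫ x in δ..(π/2), f' x * Real.cos (K*x) := by
    rw [← intervalIntegral.integral_const_mul]
    apply intervalIntegral.integral_congr
    intro x _
    field_simp
  have hstep4 : (∫ x in δ..(π/2), f'' x * (Real.sin (K*x)/K)) = K⁻¹ * J := by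
    rw [hJdef, ← intervalIntegral.integral_const_mul]
    apply intervalIntegral.integral_congr
    intro x _
    field_simp
  have hI2eq : (∫ x in δ..(π/2), F x)
      = f δ * Real.cos (K*δ) * K⁻¹ - f' δ * Real.sin (K*δ) * (K⁻¹ * K⁻¹)
        - J * (K⁻¹ * K⁻¹) := by
    rw [hIBP1, hstep2, hIBP2, hstep4, hfπ2, hf'π2]
    field_simp
    ring
  -- bound on J
  have hJbd : |J| ≤ A * δ ^ (α-1) / (1-α) := by
    have hg : IntervalIntegrable (fun x : ℝ => A * x ^ (α-2)) volume δ (π/2) := by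
      apply IntervalIntegrable.const_mul
      apply intervalIntegral.intervalIntegrable_rpow
      right
      rw [huIcc]
      intro h
      exact absurd h.1 (by linarith)
    have hbd : ∀ᵐ t ∂(volume.restrict (Set.uIoc δ (π/2))), ‖f'' t * Real.sin (K*t)‖ ≤ A * t ^ (α-2) := by
      rw [uIoc_of_le hδπ2.le]
      filter_upwards [ae_restrict_mem measurableSet_Ioc] with t ht
      by_cases htπ4 : t ≤ π/4
      · have h1 : |f'' t| ≤ A * t ^ (α-2) := hb2 t ⟨by linarith [ht.1], htπ4⟩
        calc ‖f'' t * Real.sin (K*t)‖ = |f'' t| * |Real.sin (K*t)| := abs_mul _ _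
          _ ≤ (A * t ^ (α-2)) * 1 :=
              mul_le_mul h1 (Real.abs_sin_le_one _) (abs_nonneg _)
                (le_trans (abs_nonneg _) h1)
          _ = A * t ^ (α-2) := mul_one _
      · have hz : f'' t = 0 := hf''0 t ⟨by linarith, by linarith [ht.2]⟩
        rw [hz]
        simp only [zero_mul, norm_zero]
        have ht0 : 0 < t := by linarith [ht.1]
        positivity
    have hmain := intervalIntegral.norm_integral_le_abs_of_norm_le hbd hg
    have hval : (∫ x in δ..(π/2), A * x ^ (α-2))
        = A * (((π/2) ^ (α-1) - δ ^ (α-1)) / (α-1)) := by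
      rw [intervalIntegral.integral_const_mul,
        integral_rpow (Or.inr ⟨by linarith, by rw [huIcc]; intro h; exact absurd h.1 (by linarith)⟩)]
      rw [show α - 2 + 1 = α - 1 from by ring]
    have hmono : (π/2) ^ (α-1) ≤ δ ^ (α-1) :=
      Real.rpow_le_rpow_of_nonpos hδ0 hδπ2.le (by linarith)
    have hflip : ((π/2) ^ (α-1) - δ ^ (α-1)) / (α-1)
        = (δ ^ (α-1) - (π/2) ^ (α-1)) / (1-α) := by
      rw [div_eq_div_iff (by linarith) (by linarith)]
      ring
    have hπ2pos : (0:ℝ) < (π/2) ^ (α-1) := Real.rpow_pos_of_pos (by linarith) _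
    refine le_trans hmain ?_
    have hnn : 0 ≤ A * ((δ ^ (α-1) - (π/2) ^ (α-1)) / (1-α)) :=
      mul_nonneg hA.le (div_nonneg (by linarith) h1α.le)
    rw [hval, hflip, abs_of_nonneg hnn]
    calc A * ((δ ^ (α-1) - (π/2) ^ (α-1)) / (1-α))
        ≤ A * (δ ^ (α-1) / (1-α)) :=
          mul_le_mul_of_nonneg_left ((div_le_div_iff_of_pos_right h1α).mpr (by linarith)) hA.le
      _ = A * δ ^ (α-1) / (1-α) := by ring
  -- bound on [δ, π/2]
  have hfδ : |f δ| ≤ A * δ ^ α := hb0 δ ⟨hδ0, hδπ4.le⟩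
  have hf'δ : |f' δ| ≤ A * δ ^ (α-1) := hb1 δ ⟨hδ0, hδπ4.le⟩
  have hKi : (0:ℝ) < K⁻¹ := by positivity
  have e1 : δ ^ α * K⁻¹ ≤ K ^ (-1-α) :=
    le_of_le_of_eq (mul_le_mul_of_nonneg_right hrpow1 hKi.le) hKm3
  have e2 : δ ^ (α-1) * (K⁻¹ * K⁻¹) ≤ 2 * K ^ (-1-α) := by
    calc δ ^ (α-1) * (K⁻¹*K⁻¹) ≤ 2 * K ^ (1-α) * (K⁻¹*K⁻¹) :=
          mul_le_mul_of_nonneg_right hrpow2 (by positivity)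
      _ = 2 * (K ^ (1-α) * (K⁻¹*K⁻¹)) := by ring
      _ = 2 * K ^ (-1-α) := by rw [hKm2]
  have hI2 : |∫ x in δ..(π/2), F x| ≤ (3 + 2/(1-α)) * (A * K ^ (-1-α)) := by
    rw [hI2eq]
    have htri : |f δ * Real.cos (K*δ) * K⁻¹ - f' δ * Real.sin (K*δ) * (K⁻¹ * K⁻¹)
        - J * (K⁻¹ * K⁻¹)|
        ≤ |f δ * Real.cos (K*δ) * K⁻¹| + |f' δ * Real.sin (K*δ) * (K⁻¹ * K⁻¹)|
          + |J * (K⁻¹ * K⁻¹)| := by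
      have hre : f δ * Real.cos (K*δ) * K⁻¹ - f' δ * Real.sin (K*δ) * (K⁻¹ * K⁻¹)
          - J * (K⁻¹ * K⁻¹)
          = f δ * Real.cos (K*δ) * K⁻¹ + -(f' δ * Real.sin (K*δ) * (K⁻¹ * K⁻¹))
            + -(J * (K⁻¹ * K⁻¹)) := by ring
      rw [hre]
      refine (abs_add_three _ _ _).trans ?_
      rw [abs_neg, abs_neg]
    refine le_trans htri ?_
    have t1 : |f δ * Real.cos (K*δ) * K⁻¹| ≤ A * K ^ (-1-α) := by
      rw [abs_mul, abs_mul, abs_of_pos hKi]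
      calc |f δ| * |Real.cos (K*δ)| * K⁻¹ ≤ (A * δ ^ α) * 1 * K⁻¹ := by
            apply mul_le_mul_of_nonneg_right _ hKi.le
            exact mul_le_mul hfδ (Real.abs_cos_le_one _) (abs_nonneg _) (by positivity)
        _ = A * (δ ^ α * K⁻¹) := by ring
        _ ≤ A * K ^ (-1-α) := mul_le_mul_of_nonneg_left e1 hA.le
    have t2 : |f' δ * Real.sin (K*δ) * (K⁻¹ * K⁻¹)| ≤ 2 * (A * K ^ (-1-α)) := by
      rw [abs_mul, abs_mul, abs_of_pos (by positivity : (0:ℝ) < K⁻¹ * K⁻¹)]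
      calc |f' δ| * |Real.sin (K*δ)| * (K⁻¹*K⁻¹) ≤ (A * δ ^ (α-1)) * 1 * (K⁻¹*K⁻¹) := by
            apply mul_le_mul_of_nonneg_right _ (by positivity)
            exact mul_le_mul hf'δ (Real.abs_sin_le_one _) (abs_nonneg _) (by positivity)
        _ = A * (δ ^ (α-1) * (K⁻¹*K⁻¹)) := by ring
        _ ≤ A * (2 * K ^ (-1-α)) := mul_le_mul_of_nonneg_left e2 hA.le
        _ = 2 * (A * K ^ (-1-α)) := by ring
    have t3 : |J * (K⁻¹ * K⁻¹)| ≤ (2/(1-α)) * (A * K ^ (-1-α)) := by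
      rw [abs_mul, abs_of_pos (by positivity : (0:ℝ) < K⁻¹ * K⁻¹)]
      calc |J| * (K⁻¹*K⁻¹) ≤ (A * δ ^ (α-1) / (1-α)) * (K⁻¹*K⁻¹) :=
            mul_le_mul_of_nonneg_right hJbd (by positivity)
        _ = (A / (1-α)) * (δ ^ (α-1) * (K⁻¹*K⁻¹)) := by ring
        _ ≤ (A / (1-α)) * (2 * K ^ (-1-α)) :=
            mul_le_mul_of_nonneg_left e2 (by positivity)
        _ = (2/(1-α)) * (A * K ^ (-1-α)) := by ring
    linarith
  -- conclusion
  have hgoal : |∫ x in (0:ℝ)..π, F x| ≤ (4 + 2/(1-α)) * A * K ^ (-1-α) := by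
    rw [hsplit]
    calc |(∫ x in (0:ℝ)..δ, F x) + ∫ x in δ..(π/2), F x|
        ≤ |∫ x in (0:ℝ)..δ, F x| + |∫ x in δ..(π/2), F x| := abs_add_le _ _
      _ ≤ A * K ^ (-1-α) + (3 + 2/(1-α)) * (A * K ^ (-1-α)) := add_le_add hI1 hI2
      _ = (4 + 2/(1-α)) * A * K ^ (-1-α) := by ring
  exact hgoal
end
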